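/- arXiv:1610.05354 — 7 statements merged into one kernel-verified Lean document; each statement's English description precedes it below -/
import Mathlib

section
/- Let n ≥ k' > k be non-negative integers and let μ, ν be partitions of n. If N(μ/τ) = N(ν/τ) for every partition τ of n−k, then N(μ/σ) = N(ν/σ) for every partition σ of n−k'. (Here N(λ/τ) denotes the number of standard Young tableaux of skew shape λ/τ, with N(λ/τ) = 0 when τ is not contained in λ.) -/
/-- The hook length of the cell `(i, j)` (0-indexed) in a Young diagram. -/
def hookLen (lam : YoungDiagram) (i j : ℕ) : ℕ :=
  (lam.rowLen i - j) + (lam.colLen j - i) - 1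

/-- The excitation factor `E_m(λ)` of the one-row partition `[m]` in `λ`:
`Σ_{i₁ ≤ … ≤ i_m} h_{i₁,i₁}·h_{i₂,i₂+1}⋯h_{i_m,i_m+m−1}` over tuples such that each
cell `(i_t, i_t + t − 1)` lies in `λ` (0-indexed here: cell `(f t, f t + t)`). -/
noncomputable def excite (lam : YoungDiagram) (m : ℕ) : ℕ :=
  ∑ᶠ f ∈ {f : Fin m → ℕ | Monotone f ∧ ∀ t : Fin m, (f t, f t + (t : ℕ)) ∈ lam},
    ∏ t : Fin m, hookLen lam (f t) (f t + (t : ℕ))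

/-- `b` is obtained from `a` by adding a single cell. -/
def AddCell (a b : YoungDiagram) : Prop := a ≤ b ∧ b.card = a.card + 1

/-- `skewSYT lam mu` is the number of standard Young tableaux of skew shape `lam / mu`,
counted as the number of saturated chains of Young diagrams from `mu` to `lam`
(each step adding one cell); it is `0` if `mu` is not contained in `lam`. -/
noncomputable def skewSYT (lam mu : YoungDiagram) : ℕ :=
  Nat.card {c : List YoungDiagram //
    c.Chain' AddCell ∧ c.head? = some mu ∧ c.getLast? = some lam}

open YoungDiagram

lemma mem_lt_card {d : YoungDiagram} {i j : ℕ} (h : (i, j) ∈ d) : i < d.card ∧ j < d.card := by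
  constructor
  · calc i < d.colLen j := mem_iff_lt_colLen.mp h
      _ ≤ d.card := by
          rw [colLen_eq_card]; exact Finset.card_le_card (Finset.filter_subset _ _)
  · calc j < d.rowLen i := mem_iff_lt_rowLen.mp h
      _ ≤ d.card := by
          rw [rowLen_eq_card]; exact Finset.card_le_card (Finset.filter_subset _ _)

lemma finite_subdiagrams (B : Finset (ℕ × ℕ)) : {d : YoungDiagram | d.cells ⊆ B}.Finite := by
  apply Set.Finite.of_finite_image (f := YoungDiagram.cells)
  · apply Set.Finite.subset (B.powerset : Finset (Finset (ℕ × ℕ))).finite_toSet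
    rintro s ⟨d, hd, rfl⟩
    simpa [Finset.mem_powerset] using hd
  · intro a _ b _ hab
    exact YoungDiagram.ext hab

lemma finite_le (lam : YoungDiagram) : {d : YoungDiagram | d ≤ lam}.Finite :=
  (finite_subdiagrams lam.cells).subset fun d hd => cells_subset_iff.mpr hd

lemma finite_addCell (σ : YoungDiagram) : {τ : YoungDiagram | AddCell σ τ}.Finite := by
  apply (finite_subdiagrams ((Finset.range (σ.card + 1)) ×ˢ (Finset.range (σ.card + 1)))).subset
  rintro τ ⟨hle, hcard⟩ ⟨i, j⟩ hx
  have hm : (i, j) ∈ τ := by rwa [← YoungDiagram.mem_cells]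
  have := mem_lt_card hm
  simp only [Finset.mem_product, Finset.mem_range]
  omega

lemma le_of_mem_chain {lam : YoungDiagram} :
    ∀ (c : List YoungDiagram), c.Chain' AddCell → c.getLast? = some lam →
      ∀ x ∈ c, x ≤ lam
  | [], _, hl => by simp at hl
  | [a], _, hl => by
      simp at hl
      subst hl
      simp
  | a :: b :: t, hc, hl => by
      change List.IsChain _ _ at hc
      rw [List.isChain_cons_cons] at hc
      rw [List.getLast?_cons_cons] at hl
      intro x hx
      rcases List.mem_cons.mp hx with rfl | hx
      · exact hc.1.1.trans (le_of_mem_chain (b :: t) hc.2 hl b (by simp))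
      · exact le_of_mem_chain (b :: t) hc.2 hl x hx

lemma length_le_chain {lam : YoungDiagram} (c : List YoungDiagram) (hc : c.Chain' AddCell)
    (hl : c.getLast? = some lam) : c.length ≤ lam.card + 1 := by
  have hmono : (c.map YoungDiagram.card).Chain' (· < ·) := by
    show List.IsChain _ _
    rw [List.isChain_map]
    exact (hc : List.IsChain AddCell c).imp fun a b (hab : AddCell a b) => hab.2 ▸ Nat.lt_succ_self _
  have hpw := List.isChain_iff_pairwise.mp hmono
  have hnd : (c.map YoungDiagram.card).Nodup := hpw.imp fun h => Nat.ne_of_lt h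
  have hsub : (c.map YoungDiagram.card).toFinset ⊆ Finset.range (lam.card + 1) := by
    intro m hm
    rw [List.mem_toFinset, List.mem_map] at hm
    obtain ⟨x, hx, rfl⟩ := hm
    have hxle := le_of_mem_chain c hc hl x hx
    have hcc : x.card ≤ lam.card := Finset.card_le_card (cells_subset_iff.mpr hxle)
    exact Finset.mem_range.mpr (Nat.lt_succ_of_le hcc)
  have := Finset.card_le_card hsub
  rw [List.toFinset_card_of_nodup hnd] at this
  simpa using this

lemma chains_finite (σ lam : YoungDiagram) :
    {c : List YoungDiagram |
      c.Chain' AddCell ∧ c.head? = some σ ∧ c.getLast? = some lam}.Finite := by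
  classical
  haveI : Finite {d : YoungDiagram // d ≤ lam} := (finite_le lam).to_subtype
  have h2 : {l : List {d : YoungDiagram // d ≤ lam} | l.length ≤ lam.card + 1}.Finite :=
    List.finite_length_le _ _
  apply (h2.image (List.map Subtype.val)).subset
  rintro c ⟨hc, hh, hl⟩
  refine ⟨c.pmap (fun x hx => (⟨x, hx⟩ : {d : YoungDiagram // d ≤ lam}))
    (le_of_mem_chain c hc hl), ?_, ?_⟩
  · simpa using length_le_chain c hc hl
  · simp [List.map_pmap]

lemma skew_rec (lam σ : YoungDiagram) (h : σ.card < lam.card) :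
    skewSYT lam σ = ∑ τ ∈ (finite_addCell σ).toFinset, skewSYT lam τ := by
  classical
  set T := (finite_addCell σ).toFinset with hT
  let C : YoungDiagram → Type := fun τ => {c : List YoungDiagram //
    c.Chain' AddCell ∧ c.head? = some τ ∧ c.getLast? = some lam}
  have hAdd : ∀ τ : T, AddCell σ (τ : YoungDiagram) := fun τ =>
    (finite_addCell σ).mem_toFinset.mp τ.2
  let g : (Σ τ : T, C (τ : YoungDiagram)) → C σ := fun p =>
    ⟨σ :: p.2.val, by
      refine List.isChain_cons.mpr ⟨?_, p.2.2.1⟩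
      intro b hb
      rw [p.2.2.2.1] at hb
      cases hb
      exact hAdd p.1,
     by simp,
     by
      obtain ⟨⟨τ, hτ⟩, c, hc, hh, hl⟩ := p
      obtain ⟨t, rfl⟩ : ∃ t, c = τ :: t := by
        cases c with
        | nil => simp at hh
        | cons a t =>
          have ha : a = τ := by simpa using hh
          exact ⟨t, by rw [ha]⟩
      simpa using hl⟩
  have hbij : Function.Bijective g := by
    constructor
    · rintro ⟨τ₁, c₁⟩ ⟨τ₂, c₂⟩ hgg
      have hcc : σ :: c₁.val = σ :: c₂.val := congrArg Subtype.val hgg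
      have hc : c₁.val = c₂.val := by simpa using hcc
      have hτ : (τ₁ : YoungDiagram) = τ₂ := by
        have h1 := c₁.2.2.1
        have h2 := c₂.2.2.1
        rw [hc, h2] at h1
        exact (Option.some_injective _ h1).symm
      cases τ₁; cases τ₂
      simp only at hτ
      subst hτ
      simp only [Sigma.mk.inj_iff, heq_eq_eq]
      exact ⟨trivial, Subtype.ext hc⟩
    · rintro ⟨c, hc, hh, hl⟩
      obtain ⟨t, rfl⟩ : ∃ t, c = σ :: t := by
        cases c with
        | nil => simp at hh
        | cons a t =>
          have ha : a = σ := by simpa using hh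
          exact ⟨t, by rw [ha]⟩
      cases t with
      | nil =>
        simp only [List.getLast?_singleton, Option.some.injEq] at hl
        subst hl
        omega
      | cons τ r =>
        change List.IsChain _ _ at hc
        rw [List.isChain_cons_cons] at hc
        rw [List.getLast?_cons_cons] at hl
        have hτT : τ ∈ T := by
          rw [hT, Set.Finite.mem_toFinset]
          exact hc.1
        exact ⟨⟨⟨τ, hτT⟩, ⟨τ :: r, hc.2, rfl, hl⟩⟩, rfl⟩
  haveI : ∀ τ : YoungDiagram, Fintype (C τ) :=
    fun τ => @Fintype.ofFinite _ ((chains_finite τ lam).to_subtype)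
  have h1 : skewSYT lam σ = Nat.card (Σ τ : T, C (τ : YoungDiagram)) :=
    (Nat.card_eq_of_bijective g hbij).symm
  rw [h1, Nat.card_eq_fintype_card, Fintype.card_sigma,
    ← Finset.sum_coe_sort T (fun τ => skewSYT lam τ)]
  exact Finset.sum_congr rfl fun τ _ => by
    rw [show skewSYT lam ↑τ = Nat.card (C ↑τ) from rfl, Nat.card_eq_fintype_card]


/-- if two partitions of n have the same multiset of k-minors, then they
have the same multiset of k'-minors for every n ≥ k' > k. -/
theorem minor_multiset_mono (n k k' : ℕ) (hkk' : k < k') (hk'n : k' ≤ n)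
    (μ ν : YoungDiagram) (hμ : μ.card = n) (hν : ν.card = n)
    (h : ∀ τ : YoungDiagram, τ.card = n - k → skewSYT μ τ = skewSYT ν τ) :
    ∀ σ : YoungDiagram, σ.card = n - k' → skewSYT μ σ = skewSYT ν σ := by
  have key : ∀ d, k + d ≤ n → ∀ σ : YoungDiagram, σ.card = n - (k + d) →
      skewSYT μ σ = skewSYT ν σ := by
    intro d
    induction d with
    | zero => intro _ σ hσ; exact h σ (by omega)
    | succ d ih =>
      intro hdn σ hσ
      rw [skew_rec μ σ (by omega), skew_rec ν σ (by omega)]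
      refine Finset.sum_congr rfl fun τ hτ => ?_
      rw [Set.Finite.mem_toFinset] at hτ
      exact ih (by omega) τ (by have := hτ.2; omega)
  intro σ hσ
  exact key (k' - k) (by omega) σ (by omega)
end

section
/- Let λ be a partition with first row of length k = λ₁ and first-row hook lengths a₁ > a₂ > … > a_k. Then for every non-negative integer m ≤ k, E_m(λ) equals the coefficient of X^m in the power series (1+a₁X)(1+a₂X)⋯(1+a_kX) / ((1+X)(1+2X)⋯(1+(k−m)X)). -/
namespace ExciteAux

local notation "PC" => (PowerSeries.C : ℚ →+* PowerSeries ℚ)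
local notation "PX" => (PowerSeries.X : PowerSeries ℚ)
local notation "cf" => PowerSeries.coeff (R := ℚ)



lemma constCoeff_one_add (c : ℚ) :
    PowerSeries.constantCoeff (R := ℚ) (1 + PC c * PX) = 1 := by simp

lemma constCoeff_prod {ι : Type*} (s : Finset ι) (c : ι → ℚ) :
    PowerSeries.constantCoeff (R := ℚ) (∏ i ∈ s, (1 + PC (c i) * PX)) = 1 := by
  rw [map_prod]
  simp

lemma prod_mul_inv_cancel {ι : Type*} (s : Finset ι) (c : ι → ℚ) :
    (∏ i ∈ s, (1 + PC (c i) * PX)) * (∏ i ∈ s, (1 + PC (c i) * PX))⁻¹ = 1 :=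
  PowerSeries.mul_inv_cancel _ (by rw [constCoeff_prod]; norm_num)

/-- coefficient m of X^n * A is 0 when m < n -/
lemma coeff_X_pow_mul_eq_zero {m n : ℕ} (h : m < n) (A : PowerSeries ℚ) :
    cf m (PX ^ n * A) = 0 := by
  rw [PowerSeries.coeff_mul]
  apply Finset.sum_eq_zero
  rintro ⟨a, b⟩ hab
  rw [Finset.HasAntidiagonal.mem_antidiagonal] at hab
  rw [PowerSeries.coeff_X_pow]
  have : a ≠ n := by omega
  simp [this]

/-- a product of `card s` factors of the form `1 + c X` has no coefficients above `card s` -/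
lemma coeff_prod_eq_zero {ι : Type*} :
    ∀ (s : Finset ι) (m : ℕ) (c : ι → ℚ), s.card < m → cf m (∏ i ∈ s, (1 + PC (c i) * PX)) = 0 := by
  classical
  intro s
  induction s using Finset.induction with
  | empty =>
    intro m c hm
    rw [Finset.prod_empty, PowerSeries.coeff_one]
    simp only [Finset.card_empty] at hm
    simp [show ¬ m = 0 by omega]
  | @insert a s ha ih =>
    intro m c hm
    rw [Finset.card_insert_of_notMem ha] at hm
    rw [Finset.prod_insert ha]
    rw [add_mul, one_mul, map_add, mul_assoc, ih m c (by omega)]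
    obtain ⟨m', rfl⟩ : ∃ m', m = m' + 1 := ⟨m - 1, by omega⟩
    rw [PowerSeries.coeff_C_mul, PowerSeries.coeff_succ_X_mul, ih m' c (by omega), mul_zero,
      add_zero]





lemma one_add_X_mul_inv : (1 + PX) * (1 + PX)⁻¹ = 1 :=
  PowerSeries.mul_inv_cancel _ (by simp)

noncomputable def uu : PowerSeries ℚ := PX * (1 + PX)⁻¹

lemma constantCoeff_uu : PowerSeries.constantCoeff (R := ℚ) uu = 0 := by
  rw [uu, map_mul]
  simp

lemma one_add_mul_uu (c : ℚ) : (1 + PX) * (1 + PC c * uu) = 1 + PC (c + 1) * PX := by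
  have h : (1 + PX) * (1 + PC c * uu) = (1 + PX) + PC c * PX * ((1 + PX) * (1 + PX)⁻¹) := by
    rw [uu]; ring
  rw [h, one_add_X_mul_inv, map_add, map_one]
  ring

lemma pow_mul_inv_pow (n : ℕ) : (1 + PX) ^ n * ((1 + PX)⁻¹) ^ n = 1 := by
  rw [← mul_pow, one_add_X_mul_inv, one_pow]

lemma one_add_pow_eq_prod (n : ℕ) :
    (1 + PX) ^ n = ∏ i ∈ Finset.range n, (1 + PC ((fun _ => (1:ℚ)) i) * PX) := by
  rw [Finset.prod_const]
  · norm_num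
  
lemma coeff_one_add_pow_eq_zero {m n : ℕ} (h : n < m) : cf m ((1 + PX) ^ n) = 0 := by
  rw [one_add_pow_eq_prod]
  exact coeff_prod_eq_zero _ m _ (by simpa using h)

lemma coeff_uu_pow (m j : ℕ) (hm : 1 ≤ m) :
    cf m ((1 + PX) ^ (m - 1) * uu ^ j) = if j = m then 1 else 0 := by
  have huu : uu ^ j = PX ^ j * ((1 + PX)⁻¹) ^ j := by rw [uu, mul_pow]
  rcases lt_trichotomy j m with hj | rfl | hj
  · rw [if_neg (by omega)]
    have hdec : (1 + PX) ^ (m - 1) = (1 + PX) ^ (m - 1 - j) * (1 + PX) ^ j := by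
      rw [← pow_add]; congr 1; omega
    have : (1 + PX) ^ (m - 1) * uu ^ j = PX ^ j * (1 + PX) ^ (m - 1 - j) := by
      rw [huu, hdec]
      calc (1 + PX) ^ (m - 1 - j) * (1 + PX) ^ j * (PX ^ j * ((1 + PX)⁻¹) ^ j)
          = PX ^ j * (1 + PX) ^ (m - 1 - j) * ((1 + PX) ^ j * ((1 + PX)⁻¹) ^ j) := by ring
        _ = PX ^ j * (1 + PX) ^ (m - 1 - j) := by rw [pow_mul_inv_pow, mul_one]
    rw [this]
    obtain ⟨d, rfl⟩ : ∃ d, m = d + j := ⟨m - j, by omega⟩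
    rw [PowerSeries.coeff_X_pow_mul]
    exact coeff_one_add_pow_eq_zero (by omega)
  · rw [if_pos rfl]
    have : (1 + PX) ^ (j - 1) * uu ^ j = PX ^ j * (1 + PX)⁻¹ := by
      rw [huu]
      have hj1 : ((1 + PX)⁻¹) ^ j = ((1 + PX)⁻¹) ^ (j - 1) * (1 + PX)⁻¹ := by
        rw [← pow_succ]; congr 1; omega
      calc (1 + PX) ^ (j - 1) * (PX ^ j * ((1 + PX)⁻¹) ^ j)
          = PX ^ j * ((1 + PX) ^ (j - 1) * ((1 + PX)⁻¹) ^ (j - 1)) * (1 + PX)⁻¹ := by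
            rw [hj1]; ring
        _ = PX ^ j * (1 + PX)⁻¹ := by rw [pow_mul_inv_pow]; ring
    rw [this]
    have h2 := PowerSeries.coeff_X_pow_mul ((1 + PX)⁻¹) j 0
    rw [zero_add] at h2
    rw [h2, PowerSeries.coeff_zero_eq_constantCoeff, PowerSeries.constantCoeff_inv]
    simp
  · rw [if_neg (by omega), huu, ← mul_assoc, mul_comm ((1 + PX) ^ (m-1)) (PX ^ j), mul_assoc]
    exact coeff_X_pow_mul_eq_zero hj _

lemma constantCoeff_aeval (v : PowerSeries ℚ) (hv : PowerSeries.constantCoeff (R := ℚ) v = 0)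
    (w : Polynomial ℚ) :
    PowerSeries.constantCoeff (R := ℚ) (Polynomial.aeval v w) = w.coeff 0 := by
  induction w using Polynomial.induction_on' with
  | add p q hp hq => rw [map_add, map_add, hp, hq, Polynomial.coeff_add]
  | monomial n a =>
    rw [Polynomial.aeval_monomial, map_mul, map_pow, hv, Polynomial.coeff_monomial]
    rcases Nat.eq_zero_or_pos n with rfl | hn
    · simp [← PowerSeries.C_eq_algebraMap]
    · rw [zero_pow (by omega), mul_zero, if_neg (by omega)]

lemma coeff_aeval_uu (m : ℕ) (hm : 1 ≤ m) (s : Polynomial ℚ) :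
    cf m ((1 + PX) ^ (m - 1) * Polynomial.aeval uu s) = cf m (Polynomial.aeval PX s) := by
  induction s using Polynomial.induction_on' with
  | add p q hp hq => simp only [map_add, mul_add, hp, hq]
  | monomial n a =>
    rw [Polynomial.aeval_monomial, Polynomial.aeval_monomial, ← PowerSeries.C_eq_algebraMap]
    rw [show (1 + PX) ^ (m - 1) * (PC a * uu ^ n) = PC a * ((1 + PX) ^ (m - 1) * uu ^ n) by ring]
    rw [PowerSeries.coeff_C_mul, PowerSeries.coeff_C_mul, coeff_uu_pow m n hm,
      PowerSeries.coeff_X_pow]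
    simp [eq_comm]

lemma poly_div0 (w : Polynomial ℚ) (hw : w.coeff 0 = 1) (p : Polynomial ℚ) :
    ∃ t : Polynomial ℚ, p = w * Polynomial.C (p.coeff 0) + Polynomial.X * t := by
  have h : (p - w * Polynomial.C (p.coeff 0)).coeff 0 = 0 := by
    simp [Polynomial.coeff_sub, Polynomial.coeff_mul_C, hw]
  obtain ⟨t, ht⟩ := Polynomial.X_dvd_iff.mpr h
  exact ⟨t, by linear_combination ht⟩

lemma poly_approx (w : Polynomial ℚ) (hw : w.coeff 0 = 1) (N : ℕ) (p : Polynomial ℚ) :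
    ∃ s t : Polynomial ℚ, p = w * s + Polynomial.X ^ (N + 1) * t := by
  induction N with
  | zero =>
    obtain ⟨t, ht⟩ := poly_div0 w hw p
    exact ⟨Polynomial.C (p.coeff 0), t, by rw [pow_one]; exact ht⟩
  | succ N ih =>
    obtain ⟨s, t, hst⟩ := ih
    obtain ⟨t', ht'⟩ := poly_div0 w hw t
    refine ⟨s + Polynomial.C (t.coeff 0) * Polynomial.X ^ (N + 1), t', ?_⟩
    linear_combination hst + Polynomial.X ^ (N + 1) * ht'

lemma key_subst (m : ℕ) (hm : 1 ≤ m) (p w : Polynomial ℚ) (hw : w.coeff 0 = 1) :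
    cf m ((1 + PX) ^ (m - 1) * Polynomial.aeval uu p * (Polynomial.aeval uu w)⁻¹) =
      cf m (Polynomial.aeval PX p * (Polynomial.aeval PX w)⁻¹) := by
  have hcu : PowerSeries.constantCoeff (R := ℚ) (Polynomial.aeval uu w) = 1 := by
    rw [constantCoeff_aeval _ constantCoeff_uu, hw]
  have hcX : PowerSeries.constantCoeff (R := ℚ) (Polynomial.aeval PX w) = 1 := by
    rw [constantCoeff_aeval _ (by simp), hw]
  have hu1 : Polynomial.aeval uu w * (Polynomial.aeval uu w)⁻¹ = 1 :=
    PowerSeries.mul_inv_cancel _ (by rw [hcu]; norm_num)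
  have hX1 : Polynomial.aeval PX w * (Polynomial.aeval PX w)⁻¹ = 1 :=
    PowerSeries.mul_inv_cancel _ (by rw [hcX]; norm_num)
  obtain ⟨s, t, hst⟩ := poly_approx w hw m p
  have hXside : Polynomial.aeval PX p = Polynomial.aeval PX w * Polynomial.aeval PX s
      + PX ^ (m + 1) * Polynomial.aeval PX t := by
    rw [hst]; simp [map_add, map_mul, map_pow]
  have huside : Polynomial.aeval uu p = Polynomial.aeval uu w * Polynomial.aeval uu s
      + uu ^ (m + 1) * Polynomial.aeval uu t := by
    rw [hst]; simp [map_add, map_mul, map_pow]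
  have huu : uu ^ (m + 1) = PX ^ (m + 1) * ((1 + PX)⁻¹) ^ (m + 1) := by rw [uu, mul_pow]
  calc cf m ((1 + PX) ^ (m - 1) * Polynomial.aeval uu p * (Polynomial.aeval uu w)⁻¹)
      = cf m ((1 + PX) ^ (m - 1) * Polynomial.aeval uu s * (Polynomial.aeval uu w * (Polynomial.aeval uu w)⁻¹))
        + cf m (PX ^ (m + 1) * (((1 + PX)⁻¹) ^ (m + 1) * ((1 + PX) ^ (m - 1) * Polynomial.aeval uu t * (Polynomial.aeval uu w)⁻¹))) := by
        rw [← map_add]; congr 1; rw [huside, huu]; ring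
    _ = cf m ((1 + PX) ^ (m - 1) * Polynomial.aeval uu s) := by
        rw [hu1, mul_one, coeff_X_pow_mul_eq_zero (by omega), add_zero]
    _ = cf m (Polynomial.aeval PX s) := coeff_aeval_uu m hm s
    _ = cf m (Polynomial.aeval PX s * (Polynomial.aeval PX w * (Polynomial.aeval PX w)⁻¹))
        + cf m (PX ^ (m + 1) * (Polynomial.aeval PX t * (Polynomial.aeval PX w)⁻¹)) := by
        rw [hX1, mul_one, coeff_X_pow_mul_eq_zero (by omega), add_zero]
    _ = cf m (Polynomial.aeval PX p * (Polynomial.aeval PX w)⁻¹) := by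
        rw [← map_add]; congr 1; rw [hXside]; ring





lemma aeval_prod_one_add {ι : Type*} (v : PowerSeries ℚ) (s : Finset ι) (c : ι → ℚ) :
    Polynomial.aeval v (∏ i ∈ s, (1 + Polynomial.C (c i) * Polynomial.X)) =
      ∏ i ∈ s, (1 + PC (c i) * v) := by
  rw [map_prod]
  refine Finset.prod_congr rfl fun i _ => ?_
  simp [← PowerSeries.C_eq_algebraMap]

lemma coeff0_poly_prod {ι : Type*} (s : Finset ι) (c : ι → ℚ) :
    (∏ i ∈ s, (1 + Polynomial.C (c i) * Polynomial.X)).coeff 0 = 1 := by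
  rw [Polynomial.coeff_zero_eq_eval_zero, Polynomial.eval_prod]
  simp

lemma pow_cancel_aux (n a : ℕ) (A B : PowerSeries ℚ) :
    (1 + PX) ^ (a + n) * A * ((1 + PX) ^ n * B)⁻¹ = (1 + PX) ^ a * A * B⁻¹ := by
  rw [PowerSeries.mul_inv_rev, pow_add]
  have h : (1 + PX) ^ n * ((1 + PX) ^ n)⁻¹ = 1 :=
    PowerSeries.mul_inv_cancel _ (by rw [map_pow]; simp)
  calc (1 + PX) ^ a * (1 + PX) ^ n * A * (B⁻¹ * ((1 + PX) ^ n)⁻¹)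
      = (1 + PX) ^ a * A * B⁻¹ * ((1 + PX) ^ n * ((1 + PX) ^ n)⁻¹) := by ring
    _ = (1 + PX) ^ a * A * B⁻¹ := by rw [h, mul_one]

lemma indep (r m : ℕ) (hm : 1 ≤ m) (hmr : m ≤ r) (b : ℕ → ℚ) (d : ℕ) :
    cf m ((∏ j ∈ Finset.range r, (1 + PC (b j + (d : ℚ)) * PX)) *
      (∏ i ∈ Finset.range (r - m + 1), (1 + PC ((i : ℚ) + (d : ℚ)) * PX))⁻¹) =
    cf m ((∏ j ∈ Finset.range r, (1 + PC (b j) * PX)) *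
      (∏ i ∈ Finset.range (r - m + 1), (1 + PC ((i : ℚ)) * PX))⁻¹) := by
  induction d with
  | zero => simp
  | succ d ih =>
    have hnum : (∏ j ∈ Finset.range r, (1 + PC (b j + ((d + 1 : ℕ) : ℚ)) * PX)) =
        (1 + PX) ^ r * Polynomial.aeval uu (∏ j ∈ Finset.range r,
          (1 + Polynomial.C (b j + (d : ℚ)) * Polynomial.X)) := by
      rw [aeval_prod_one_add]
      calc ∏ j ∈ Finset.range r, (1 + PC (b j + ((d + 1 : ℕ) : ℚ)) * PX)
          = ∏ j ∈ Finset.range r, ((1 + PX) * (1 + PC (b j + (d : ℚ)) * uu)) := by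
            refine Finset.prod_congr rfl fun j _ => ?_
            rw [one_add_mul_uu]
            push_cast; ring_nf
        _ = (∏ _j ∈ Finset.range r, (1 + PX)) *
              ∏ j ∈ Finset.range r, (1 + PC (b j + (d : ℚ)) * uu) := Finset.prod_mul_distrib
        _ = (1 + PX) ^ r * ∏ j ∈ Finset.range r, (1 + PC (b j + (d : ℚ)) * uu) := by
            rw [Finset.prod_const, Finset.card_range]
    have hden : (∏ i ∈ Finset.range (r - m + 1), (1 + PC ((i : ℚ) + ((d + 1 : ℕ) : ℚ)) * PX)) =
        (1 + PX) ^ (r - m + 1) * Polynomial.aeval uu (∏ i ∈ Finset.range (r - m + 1),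
          (1 + Polynomial.C ((i : ℚ) + (d : ℚ)) * Polynomial.X)) := by
      rw [aeval_prod_one_add]
      calc ∏ i ∈ Finset.range (r - m + 1), (1 + PC ((i : ℚ) + ((d + 1 : ℕ) : ℚ)) * PX)
          = ∏ i ∈ Finset.range (r - m + 1), ((1 + PX) * (1 + PC ((i : ℚ) + (d : ℚ)) * uu)) := by
            refine Finset.prod_congr rfl fun i _ => ?_
            rw [one_add_mul_uu]
            push_cast; ring_nf
        _ = (∏ _i ∈ Finset.range (r - m + 1), (1 + PX)) *
              ∏ i ∈ Finset.range (r - m + 1), (1 + PC ((i : ℚ) + (d : ℚ)) * uu) :=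
            Finset.prod_mul_distrib
        _ = (1 + PX) ^ (r - m + 1) *
              ∏ i ∈ Finset.range (r - m + 1), (1 + PC ((i : ℚ) + (d : ℚ)) * uu) := by
            rw [Finset.prod_const, Finset.card_range]
    rw [hnum, hden]
    rw [show (1 + PX) ^ r = (1 + PX) ^ ((m - 1) + (r - m + 1)) by congr 1; omega]
    rw [pow_cancel_aux]
    rw [key_subst m hm _ _ (coeff0_poly_prod _ _), aeval_prod_one_add, aeval_prod_one_add]
    exact ih



def ExSet (lam : YoungDiagram) (m p q : ℕ) : Set (Fin m → ℕ) :=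
  {f | Monotone f ∧ ∀ t : Fin m, (f t + p, f t + (t : ℕ) + q) ∈ lam}

noncomputable def Ex (lam : YoungDiagram) (m p q : ℕ) : ℕ :=
  ∑ᶠ f ∈ ExSet lam m p q, ∏ t : Fin m, hookLen lam (f t + p) (f t + (t : ℕ) + q)

lemma exSet_finite (lam : YoungDiagram) (m p q : ℕ) : (ExSet lam m p q).Finite := by
  apply Set.Finite.subset (Set.Finite.pi fun _ : Fin m => Set.finite_Iic (lam.colLen q))
  intro f hf
  rw [Set.mem_univ_pi]
  intro t
  have h := hf.2 t
  have h1 : (f t + p, q) ∈ lam := lam.up_left_mem le_rfl (by omega) h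
  rw [YoungDiagram.mem_iff_lt_colLen] at h1
  exact Set.mem_Iic.2 (by omega)

lemma Ex_zero (lam : YoungDiagram) (p q : ℕ) : Ex lam 0 p q = 1 := by
  have hset : ExSet lam 0 p q = Set.univ := by
    ext f
    simp only [Set.mem_univ, iff_true, ExSet, Set.mem_setOf_eq]
    exact ⟨fun a => a.elim0, fun t => t.elim0⟩
  rw [Ex, hset, finsum_mem_univ]
  have h1 : ∀ f : Fin 0 → ℕ,
      (∏ t : Fin 0, hookLen lam (f t + p) (f t + (t : ℕ) + q)) = 1 := fun f => by simp
  rw [finsum_congr h1, finsum_unique]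

lemma Ex_eq_zero (lam : YoungDiagram) {m p q : ℕ} (hm : 1 ≤ m) (h : lam.rowLen p < m + q) :
    Ex lam m p q = 0 := by
  have hset : ExSet lam m p q = ∅ := by
    ext f
    simp only [Set.mem_empty_iff_false, iff_false, ExSet, Set.mem_setOf_eq]
    rintro ⟨hmono, hmem⟩
    have ht := hmem ⟨m - 1, by omega⟩
    have h2 : (p, m - 1 + q) ∈ lam := by
      refine lam.up_left_mem (by omega) ?_ ht
      have : ((⟨m - 1, by omega⟩ : Fin m) : ℕ) = m - 1 := rfl
      omega
    rw [YoungDiagram.mem_iff_lt_rowLen] at h2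
    omega
  rw [Ex, hset, finsum_mem_empty]

lemma hook_congr (lam : YoungDiagram) {a a' b b' : ℕ} (ha : a = a') (hb : b = b') :
    hookLen lam a b = hookLen lam a' b' := by rw [ha, hb]

lemma Ex_succ (lam : YoungDiagram) (m p q : ℕ) (hpq : (p, q) ∈ lam) :
    Ex lam (m + 1) p q =
      hookLen lam p q * Ex lam m p (q + 1) + Ex lam (m + 1) (p + 1) (q + 1) := by
  classical
  set F : (Fin (m + 1) → ℕ) → ℕ :=
    fun f => ∏ t : Fin (m + 1), hookLen lam (f t + p) (f t + (t : ℕ) + q) with hF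
  set S0 : Set (Fin (m + 1) → ℕ) := ExSet lam (m + 1) p q ∩ {f | f 0 = 0} with hS0
  set S1 : Set (Fin (m + 1) → ℕ) := ExSet lam (m + 1) p q ∩ {f | f 0 ≠ 0} with hS1
  have hunion : ExSet lam (m + 1) p q = S0 ∪ S1 := by
    ext f
    constructor
    · intro hf
      by_cases h : f 0 = 0
      · exact Or.inl ⟨hf, h⟩
      · exact Or.inr ⟨hf, h⟩
    · rintro (⟨hf, -⟩ | ⟨hf, -⟩) <;> exact hf
  have hdisj : Disjoint S0 S1 := by
    rw [Set.disjoint_left]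
    rintro f ⟨_, hf0⟩ ⟨_, hf1⟩
    exact hf1 hf0
  have hfin : (ExSet lam (m + 1) p q).Finite := exSet_finite lam (m + 1) p q
  have hsplit : Ex lam (m + 1) p q = (∑ᶠ f ∈ S0, F f) + ∑ᶠ f ∈ S1, F f := by
    rw [Ex, hunion, finsum_mem_union hdisj (hfin.subset (by rw [hunion]; exact Set.subset_union_left))
      (hfin.subset (by rw [hunion]; exact Set.subset_union_right))]
  rw [hsplit]
  congr 1
  · -- S0 part
    have hbij : Set.BijOn (fun (f : Fin (m + 1) → ℕ) => f ∘ Fin.succ) S0 (ExSet lam m p (q + 1)) := by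
      refine ⟨?_, ?_, ?_⟩
      · rintro f ⟨⟨hmono, hmem⟩, hf0⟩
        refine ⟨hmono.comp (Fin.strictMono_succ.monotone), fun t => ?_⟩
        have ht := hmem t.succ
        have harg : (f t.succ + p, f t.succ + (t.succ : ℕ) + q) =
            ((f ∘ Fin.succ) t + p, (f ∘ Fin.succ) t + (t : ℕ) + (q + 1)) := by
          have h2 : (t.succ : ℕ) = (t : ℕ) + 1 := by simp [Fin.val_succ]
          rw [Prod.mk.injEq, h2]
          constructor <;> simp [Function.comp_apply] <;> omega
        rwa [harg] at ht
      · rintro f1 ⟨⟨_, _⟩, hf10⟩ f2 ⟨⟨_, _⟩, hf20⟩ heq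
        funext t
        induction t using Fin.cases with
        | zero => rw [hf10, hf20]
        | succ s => exact congrFun heq s
      · rintro g ⟨hmono, hmem⟩
        refine ⟨Fin.cases 0 g, ⟨⟨?_, ?_⟩, by simp⟩, by funext s; simp⟩
        · intro a b hab
          induction a using Fin.cases with
          | zero => simp
          | succ s =>
            induction b using Fin.cases with
            | zero => exact absurd hab (by simp [Fin.le_def])
            | succ t =>
              simp only [Fin.cases_succ]
              exact hmono (by rwa [Fin.succ_le_succ_iff] at hab)
        · intro t
          induction t using Fin.cases with
          | zero => simpa using hpq
          | succ s =>
            have hs := hmem s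
            simp only [Fin.cases_succ]
            have harg : (g s + p, g s + (s : ℕ) + (q + 1)) =
                (g s + p, g s + (s.succ : ℕ) + q) := by
              have h2 : (s.succ : ℕ) = (s : ℕ) + 1 := by simp [Fin.val_succ]
              rw [Prod.mk.injEq, h2]
              constructor <;> omega
            exact harg ▸ hs
    rw [hF]
    rw [finsum_mem_eq_of_bijOn _ hbij (g := fun g => hookLen lam p q *
        ∏ s : Fin m, hookLen lam (g s + p) (g s + (s : ℕ) + (q + 1)))
      (fun f hf => ?_)]
    · -- pull out constant
      rw [Ex, finsum_mem_eq_finite_toFinset_sum _ (exSet_finite lam m p (q + 1)),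
        finsum_mem_eq_finite_toFinset_sum _ (exSet_finite lam m p (q + 1)), Finset.mul_sum]
    · -- per-element identity
      obtain ⟨⟨hmono, hmem⟩, hf0⟩ := hf
      rw [Fin.prod_univ_succ]
      congr 1
      · rw [hf0]
        norm_num
      · refine Finset.prod_congr rfl fun s _ => ?_
        simp only [Function.comp_apply, Fin.val_succ]
        exact hook_congr lam (by omega) (by omega)
  · -- S1 part
    have hbij : Set.BijOn (fun (f : Fin (m + 1) → ℕ) (t : Fin (m + 1)) => f t - 1) S1
        (ExSet lam (m + 1) (p + 1) (q + 1)) := by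
      refine ⟨?_, ?_, ?_⟩
      · rintro f ⟨⟨hmono, hmem⟩, hf0⟩
        have hge : ∀ t, 1 ≤ f t := fun t => by
          have := hmono (Fin.zero_le t)
          simp only [Set.mem_setOf_eq] at hf0
          omega
        refine ⟨fun a b hab => by
          show f a - 1 ≤ f b - 1
          have := hmono hab; have := hge a; omega, fun t => ?_⟩
        have ht := hmem t
        have harg : (f t + p, f t + (t : ℕ) + q) =
            (f t - 1 + (p + 1), f t - 1 + (t : ℕ) + (q + 1)) := by
          rw [Prod.mk.injEq]
          have := hge t
          constructor <;> omega
        show (f t - 1 + (p + 1), f t - 1 + (t : ℕ) + (q + 1)) ∈ lam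
        exact harg ▸ ht
      · rintro f1 ⟨⟨hmono1, _⟩, hf10⟩ f2 ⟨⟨hmono2, _⟩, hf20⟩ heq
        simp only [Set.mem_setOf_eq] at hf10 hf20
        funext t
        have h1 : 1 ≤ f1 t := by have := hmono1 (Fin.zero_le t); omega
        have h2 : 1 ≤ f2 t := by have := hmono2 (Fin.zero_le t); omega
        have := congrFun heq t
        simp only at this
        omega
      · rintro g ⟨hmono, hmem⟩
        refine ⟨fun t => g t + 1, ⟨⟨fun a b hab => by
          show g a + 1 ≤ g b + 1
          have := hmono hab; omega, fun t => ?_⟩,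
          by simp⟩, by funext t; simp⟩
        have ht := hmem t
        have harg : (g t + (p + 1), g t + (t : ℕ) + (q + 1)) =
            (g t + 1 + p, g t + 1 + (t : ℕ) + q) := by
          rw [Prod.mk.injEq]
          constructor <;> omega
        show (g t + 1 + p, g t + 1 + (t : ℕ) + q) ∈ lam
        exact harg ▸ ht
    rw [hF, Ex]
    refine finsum_mem_eq_of_bijOn _ hbij fun f hf => ?_
    obtain ⟨⟨hmono, hmem⟩, hf0⟩ := hf
    simp only [Set.mem_setOf_eq] at hf0
    refine Finset.prod_congr rfl fun t _ => ?_
    have h1 : 1 ≤ f t := by have := hmono (Fin.zero_le t); omega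
    show hookLen lam (f t + p) (f t + (t : ℕ) + q) =
      hookLen lam (f t - 1 + (p + 1)) (f t - 1 + (t : ℕ) + (q + 1))
    exact hook_congr lam (by omega) (by omega)



lemma coeff_mul_prod_eq_zero {ι κ : Type*} (s : Finset ι) (t : Finset κ)
    (c : ι → ℚ) (c' : κ → ℚ) {m : ℕ} (h : s.card + t.card < m) :
    cf m ((∏ i ∈ s, (1 + PC (c i) * PX)) * ∏ i ∈ t, (1 + PC (c' i) * PX)) = 0 := by
  rw [PowerSeries.coeff_mul]
  apply Finset.sum_eq_zero
  rintro ⟨a, b⟩ hab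
  rw [Finset.HasAntidiagonal.mem_antidiagonal] at hab
  rcases Nat.lt_or_ge s.card a with h1 | h1
  · rw [coeff_prod_eq_zero s a c h1, zero_mul]
  · rw [coeff_prod_eq_zero t b c' (by omega), mul_zero]

lemma coeff_one_add_mul (c : ℚ) (Z : PowerSeries ℚ) (m' : ℕ) :
    cf (m' + 1) ((1 + PC c * PX) * Z) = cf (m' + 1) Z + c * cf m' Z := by
  rw [add_mul, one_mul, map_add, mul_assoc, PowerSeries.coeff_C_mul,
    PowerSeries.coeff_succ_X_mul]

lemma mul_mul_inv_cancel_aux (A B C : PowerSeries ℚ)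
    (hB : PowerSeries.constantCoeff (R := ℚ) B ≠ 0) : A * B * (B * C)⁻¹ = A * C⁻¹ := by
  rw [PowerSeries.mul_inv_rev]
  calc A * B * (C⁻¹ * B⁻¹) = A * C⁻¹ * (B * B⁻¹) := by ring
    _ = A * C⁻¹ := by rw [PowerSeries.mul_inv_cancel _ hB, mul_one]

lemma Icc_one_prod_eq (n : ℕ) (g : ℕ → PowerSeries ℚ) :
    ∏ i ∈ Finset.Icc 1 n, g i = ∏ i ∈ Finset.range n, g (1 + i) := by
  rw [show Finset.Icc 1 n = Finset.Ico 1 (n + 1) from (Finset.Ico_add_one_right_eq_Icc 1 n).symm,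
    Finset.prod_Ico_eq_prod_range]
  simp

lemma den_range_succ_eq (n : ℕ) :
    ∏ i ∈ Finset.range (n + 1), (1 + PC (i : ℚ) * PX) =
      ∏ i ∈ Finset.Icc 1 n, (1 + PC (i : ℚ) * PX) := by
  rw [Finset.prod_range_succ', Icc_one_prod_eq]
  simp only [Nat.cast_zero, map_zero, zero_mul, add_zero, mul_one]
  refine Finset.prod_congr rfl fun i _ => ?_
  push_cast
  ring_nf

lemma main (lam : YoungDiagram) :
    ∀ n m p q : ℕ, m + (lam.rowLen p - q) ≤ n → m ≤ lam.rowLen p - q →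
    (Ex lam m p q : ℚ) =
      cf m ((∏ j ∈ Finset.range (lam.rowLen p - q),
          (1 + PC ((hookLen lam p (q + j) : ℕ) : ℚ) * PX)) *
        (∏ i ∈ Finset.Icc 1 (lam.rowLen p - q - m), (1 + PC ((i : ℕ) : ℚ) * PX))⁻¹) := by
  intro n
  induction n with
  | zero =>
    intro m p q hn hm
    have hm0 : m = 0 := by omega
    have hk0 : lam.rowLen p - q = 0 := by omega
    subst hm0
    rw [hk0]
    rw [Ex_zero, PowerSeries.coeff_zero_eq_constantCoeff, map_mul, constCoeff_prod,
      PowerSeries.constantCoeff_inv, constCoeff_prod]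
    norm_num
  | succ n ih =>
    intro m p q hn hm
    rcases m with _ | m'
    · rw [Nat.sub_zero, Ex_zero, PowerSeries.coeff_zero_eq_constantCoeff, map_mul,
        constCoeff_prod, PowerSeries.constantCoeff_inv, constCoeff_prod]
      norm_num
    · -- the inductive step
      obtain ⟨k1, hK⟩ : ∃ k1, lam.rowLen p - q = k1 + 1 :=
        ⟨lam.rowLen p - q - 1, by omega⟩
      have hq : q < lam.rowLen p := by omega
      have hpq : (p, q) ∈ lam := YoungDiagram.mem_iff_lt_rowLen.2 hq
      have hanti : lam.rowLen (p + 1) ≤ lam.rowLen p := lam.rowLen_anti p (p + 1) (by omega)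
      set k2 := lam.rowLen (p + 1) - (q + 1) with hk2
      have hk2k : k2 ≤ k1 := by omega
      set e := k1 + 1 - k2 with he
      have he1 : 1 ≤ e := by omega
      -- hook length facts
      have hF2 : ∀ j' : ℕ, j' < k2 →
          hookLen lam p (q + (j' + 1)) = hookLen lam (p + 1) (q + 1 + j') + e := by
        intro j' hj'
        have hmem : (p + 1, q + 1 + j') ∈ lam := YoungDiagram.mem_iff_lt_rowLen.2 (by omega)
        have hc : p + 1 < lam.colLen (q + 1 + j') := YoungDiagram.mem_iff_lt_colLen.1 hmem
        have harg : q + (j' + 1) = q + 1 + j' := by omega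
        rw [harg]
        unfold hookLen
        omega
      have hF3 : ∀ j : ℕ, k2 ≤ j → j < k1 →
          hookLen lam p (q + (j + 1)) = k1 - j := by
        intro j h1 h2
        have hmem0 : (p, q + (j + 1)) ∈ lam := YoungDiagram.mem_iff_lt_rowLen.2 (by omega)
        have hc1 : p < lam.colLen (q + (j + 1)) := YoungDiagram.mem_iff_lt_colLen.1 hmem0
        have hnot : (p + 1, q + (j + 1)) ∉ lam := by
          intro hmem
          rw [YoungDiagram.mem_iff_lt_rowLen] at hmem
          omega
        have hc2 : lam.colLen (q + (j + 1)) ≤ p + 1 := by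
          by_contra hcon
          exact hnot (YoungDiagram.mem_iff_lt_colLen.2 (by omega))
        unfold hookLen
        omega
      -- names for the pieces
      set b : ℕ → ℚ := fun j => ((hookLen lam (p + 1) (q + 1 + j) : ℕ) : ℚ) with hb
      rw [hK, show k1 + 1 - (m' + 1) = k1 - m' by omega]
      rw [Finset.prod_range_succ']
      set A : PowerSeries ℚ :=
        ∏ j ∈ Finset.range k1, (1 + PC ((hookLen lam p (q + (j + 1)) : ℕ) : ℚ) * PX) with hA
      set D : PowerSeries ℚ := ∏ i ∈ Finset.Icc 1 (k1 - m'), (1 + PC ((i : ℕ) : ℚ) * PX)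
        with hD
      rw [show q + 0 = q by omega]
      have hrearr : A * (1 + PC ((hookLen lam p q : ℕ) : ℚ) * PX) * D⁻¹ =
          (1 + PC ((hookLen lam p q : ℕ) : ℚ) * PX) * (A * D⁻¹) := by ring
      rw [hrearr, coeff_one_add_mul]
      -- combinatorial recursion
      rw [Ex_succ lam m' p q hpq]
      push_cast
      -- Term 1 : the hook * Ex m' part
      have hterm1 : (Ex lam m' p (q + 1) : ℚ) = cf m' (A * D⁻¹) := by
        have hred : lam.rowLen p - (q + 1) = k1 := by omega
        have hAeq : (∏ j ∈ Finset.range k1,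
            (1 + PC ((hookLen lam p (q + 1 + j) : ℕ) : ℚ) * PX)) = A := by
          rw [hA]
          exact Finset.prod_congr rfl fun j _ => by rw [show q + 1 + j = q + (j + 1) by omega]
        have := ih m' p (q + 1) (by omega) (by omega)
        rw [hred, hAeq, ← hD] at this
        exact this
      -- Split A
      have hsplitA : A = (∏ j ∈ Finset.range k2, (1 + PC (b j + (e : ℚ)) * PX)) *
          ∏ i ∈ Finset.Ico 1 e, (1 + PC ((i : ℕ) : ℚ) * PX) := by
        rw [hA, show k1 = k2 + (e - 1) by omega, Finset.prod_range_add]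
        congr 1
        · refine Finset.prod_congr rfl fun j hj => ?_
          rw [Finset.mem_range] at hj
          rw [hF2 j hj, hb]
          push_cast
          ring_nf
        · have hstep1 : ∀ i ∈ Finset.range (e - 1),
              (1 + PC ((hookLen lam p (q + (k2 + i + 1)) : ℕ) : ℚ) * PX) =
              (fun i => 1 + PC (((i + 1 : ℕ) : ℕ) : ℚ) * PX) (e - 1 - 1 - i) := by
            intro i hi
            rw [Finset.mem_range] at hi
            show _ = 1 + PC (((e - 1 - 1 - i + 1 : ℕ) : ℕ) : ℚ) * PX
            rw [hF3 (k2 + i) (by omega) (by omega), show k1 - (k2 + i) = e - 1 - 1 - i + 1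
              by omega]
          rw [Finset.prod_congr rfl hstep1,
            Finset.prod_range_reflect (fun i => 1 + PC (((i + 1 : ℕ) : ℕ) : ℚ) * PX) (e - 1),
            Finset.prod_Ico_eq_prod_range]
          refine Finset.prod_congr (by congr 1) fun i _ => ?_
          show 1 + PC (((i + 1 : ℕ) : ℕ) : ℚ) * PX = _
          rw [show 1 + i = i + 1 by omega]
      rcases Nat.lt_or_ge k2 (m' + 1) with hcase | hcase
      · -- m'+1 > k2 : both sides vanish
        have hEx0 : Ex lam (m' + 1) (p + 1) (q + 1) = 0 :=
          Ex_eq_zero lam (by omega) (by omega)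
        rw [hEx0]
        have hD_eq : (∏ i ∈ Finset.Ico 1 e, (1 + PC ((i : ℕ) : ℚ) * PX)) =
            D * ∏ i ∈ Finset.Ico (k1 - m' + 1) e, (1 + PC ((i : ℕ) : ℚ) * PX) := by
          rw [hD, show Finset.Icc 1 (k1 - m') = Finset.Ico 1 (k1 - m' + 1) from
            (Finset.Ico_add_one_right_eq_Icc 1 (k1 - m')).symm,
            Finset.prod_Ico_consecutive _ (by omega) (by omega)]
        have hzero : cf (m' + 1) (A * D⁻¹) = 0 := by
          rw [hsplitA, hD_eq]
          have : (∏ j ∈ Finset.range k2, (1 + PC (b j + (e : ℚ)) * PX)) *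
              (D * ∏ i ∈ Finset.Ico (k1 - m' + 1) e, (1 + PC ((i : ℕ) : ℚ) * PX)) * D⁻¹ =
              ((∏ j ∈ Finset.range k2, (1 + PC (b j + (e : ℚ)) * PX)) *
              ∏ i ∈ Finset.Ico (k1 - m' + 1) e, (1 + PC ((i : ℕ) : ℚ) * PX)) * (D * D⁻¹) := by
            ring
          rw [this, PowerSeries.mul_inv_cancel _ (by rw [hD, constCoeff_prod]; norm_num),
            mul_one]
          refine coeff_mul_prod_eq_zero _ _ _ _ ?_
          rw [Finset.card_range, Nat.card_Ico]
          omega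
        rw [hzero]
        push_cast
        rw [hterm1]
        ring
      · -- m'+1 ≤ k2 : use independence and IH
        have hIH2 : (Ex lam (m' + 1) (p + 1) (q + 1) : ℚ) = cf (m' + 1) (A * D⁻¹) := by
          have hD_eq : D = (∏ i ∈ Finset.Ico 1 e, (1 + PC ((i : ℕ) : ℚ) * PX)) *
              ∏ i ∈ Finset.Ico e (k1 - m' + 1), (1 + PC ((i : ℕ) : ℚ) * PX) := by
            rw [hD, show Finset.Icc 1 (k1 - m') = Finset.Ico 1 (k1 - m' + 1) from
              (Finset.Ico_add_one_right_eq_Icc 1 (k1 - m')).symm,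
              ← Finset.prod_Ico_consecutive _ (show 1 ≤ e by omega)
                (show e ≤ k1 - m' + 1 by omega)]
          have hcancel : A * D⁻¹ = (∏ j ∈ Finset.range k2, (1 + PC (b j + (e : ℚ)) * PX)) *
              (∏ i ∈ Finset.Ico e (k1 - m' + 1), (1 + PC ((i : ℕ) : ℚ) * PX))⁻¹ := by
            rw [hsplitA, hD_eq]
            exact mul_mul_inv_cancel_aux _ _ _ (by rw [constCoeff_prod]; norm_num)
          have hreind : (∏ i ∈ Finset.Ico e (k1 - m' + 1), (1 + PC ((i : ℕ) : ℚ) * PX)) =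
              ∏ i ∈ Finset.range (k2 - (m' + 1) + 1), (1 + PC ((i : ℚ) + (e : ℚ)) * PX) := by
            rw [Finset.prod_Ico_eq_prod_range, show k1 - m' + 1 - e = k2 - (m' + 1) + 1 by omega]
            refine Finset.prod_congr rfl fun i _ => ?_
            push_cast
            ring_nf
          rw [hcancel, hreind]
          rw [indep k2 (m' + 1) (by omega) (by omega) b e]
          -- now convert denominator back to Icc and apply IH
          rw [show k2 - (m' + 1) + 1 = (k2 - (m' + 1)) + 1 from rfl, den_range_succ_eq]
          have hred2 : lam.rowLen (p + 1) - (q + 1) = k2 := by omega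
          have := ih (m' + 1) (p + 1) (q + 1) (by omega) (by omega)
          rw [hred2] at this
          rw [this, hb]
        rw [hIH2, hterm1]
        push_cast
        ring

lemma excite_eq_Ex (lam : YoungDiagram) (m : ℕ) : excite lam m = Ex lam m 0 0 := by
  unfold excite Ex ExSet
  simp only [add_zero]

end ExciteAux

/-- for a partition λ with first row of length k = λ₁ and first-row hook
lengths a₁ > … > a_k, and m ≤ k, E_m(λ) is the coefficient of X^m in the power series
(1+a₁X)⋯(1+a_kX) / ((1+X)(1+2X)⋯(1+(k−m)X)). -/
theorem excite_eq_powerSeries_coeff (lam : YoungDiagram) (m : ℕ)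
    (hm : m ≤ lam.rowLen 0) :
    (excite lam m : ℚ) =
      PowerSeries.coeff m
        ((∏ j ∈ Finset.range (lam.rowLen 0),
            (1 + PowerSeries.C (hookLen lam 0 j : ℚ) * PowerSeries.X)) *
          (∏ j ∈ Finset.Icc 1 (lam.rowLen 0 - m),
            (1 + PowerSeries.C (j : ℚ) * PowerSeries.X))⁻¹) := by
  have h := ExciteAux.main lam (m + lam.rowLen 0) m 0 0 (by omega) (by omega)
  simp only [Nat.sub_zero, Nat.zero_add, zero_add] at h
  rw [ExciteAux.excite_eq_Ex]
  exact h
end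

section
/- Let λ be a partition whose first row has p + ℓ cells and whose second row has p cells (p ≥ 1, ℓ ≥ 0). Let λ̃ be the partition obtained by removing the first column of λ, and λ̂ the partition obtained by removing the first row of λ̃. Then for every positive integer m, E_m(λ) = a₁ · E_{m−1}(λ̃) + E_m(λ̂), where a₁ = h_{1,1} is the hook length of the top-left cell of λ. -/
private lemma nat_eq_of_lt_iff {a b : ℕ} (h : ∀ k, k < a ↔ k < b) : a = b := by
  rcases lt_trichotomy a b with hc | hc | hc
  · have := (h a).mpr hc; omega
  · exact hc
  · have := (h b).mp hc; omega

private lemma excite_set_finite (μ : YoungDiagram) (k : ℕ) :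
    {f : Fin k → ℕ | Monotone f ∧ ∀ t : Fin k, (f t, f t + (t : ℕ)) ∈ μ}.Finite := by
  apply Set.Finite.subset (Set.Finite.pi (fun _ : Fin k => Set.finite_Iio (μ.colLen 0)))
  intro f hf
  simp only [Set.mem_pi, Set.mem_univ, Set.mem_Iio, forall_true_left]
  intro t
  have h2 : (f t, 0) ∈ μ := μ.up_left_mem le_rfl (Nat.zero_le _) (hf.2 t)
  exact YoungDiagram.mem_iff_lt_colLen.mp h2

/-- let λ have first row of p + ℓ cells and second row of p cells (p ≥ 1),
let λ̃ be λ with its first column removed and λ̂ be λ̃ with its first row removed. Then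
for every m ≥ 1, E_m(λ) = h_{1,1}(λ) · E_{m−1}(λ̃) + E_m(λ̂). -/
theorem excite_recursion (p ℓ : ℕ) (hp : 1 ≤ p) (lam tlam hatlam : YoungDiagram)
    (hrow1 : lam.rowLen 0 = p + ℓ) (hrow2 : lam.rowLen 1 = p)
    (htlam : ∀ i j : ℕ, (i, j) ∈ tlam ↔ (i, j + 1) ∈ lam)
    (hhatlam : ∀ i j : ℕ, (i, j) ∈ hatlam ↔ (i + 1, j) ∈ tlam)
    (m : ℕ) (hm : 1 ≤ m) :
    excite lam m = hookLen lam 0 0 * excite tlam (m - 1) + excite hatlam m := by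
  obtain ⟨n, rfl⟩ : ∃ n, m = n + 1 := ⟨m - 1, by omega⟩
  simp only [Nat.add_sub_cancel]
  -- rowLen / colLen relations
  have trow : ∀ i, tlam.rowLen i = lam.rowLen i - 1 := by
    intro i
    apply nat_eq_of_lt_iff
    intro k
    rw [← YoungDiagram.mem_iff_lt_rowLen, htlam, YoungDiagram.mem_iff_lt_rowLen]
    omega
  have tcol : ∀ j, tlam.colLen j = lam.colLen (j + 1) := by
    intro j
    apply nat_eq_of_lt_iff
    intro k
    rw [← YoungDiagram.mem_iff_lt_colLen, htlam, YoungDiagram.mem_iff_lt_colLen]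
  have hrow : ∀ i, hatlam.rowLen i = lam.rowLen (i + 1) - 1 := by
    intro i
    apply nat_eq_of_lt_iff
    intro k
    rw [← YoungDiagram.mem_iff_lt_rowLen, hhatlam, YoungDiagram.mem_iff_lt_rowLen, trow]
  have hcol : ∀ j, hatlam.colLen j = lam.colLen (j + 1) - 1 := by
    intro j
    apply nat_eq_of_lt_iff
    intro k
    rw [← YoungDiagram.mem_iff_lt_colLen, hhatlam, htlam, YoungDiagram.mem_iff_lt_colLen]
    omega
  -- hook length relations
  have hk1 : ∀ i j, hookLen tlam i j = hookLen lam i (j + 1) := by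
    intro i j; unfold hookLen; rw [trow, tcol]; omega
  have hk2 : ∀ i j, hookLen hatlam i j = hookLen lam (i + 1) (j + 1) := by
    intro i j; unfold hookLen; rw [hrow, hcol]; omega
  have h00 : ((0 : ℕ), (0 : ℕ)) ∈ lam := by
    rw [YoungDiagram.mem_iff_lt_rowLen, hrow1]; omega
  -- the sets
  set S : Set (Fin (n + 1) → ℕ) :=
    {f | Monotone f ∧ ∀ t : Fin (n + 1), (f t, f t + (t : ℕ)) ∈ lam} with hS
  set T : Set (Fin n → ℕ) :=
    {f | Monotone f ∧ ∀ t : Fin n, (f t, f t + (t : ℕ)) ∈ tlam} with hT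
  set U : Set (Fin (n + 1) → ℕ) :=
    {f | Monotone f ∧ ∀ t : Fin (n + 1), (f t, f t + (t : ℕ)) ∈ hatlam} with hU
  set S0 : Set (Fin (n + 1) → ℕ) := {f | f ∈ S ∧ f 0 = 0} with hS0
  set S1 : Set (Fin (n + 1) → ℕ) := {f | f ∈ S ∧ f 0 ≠ 0} with hS1
  have hSfin : S.Finite := excite_set_finite lam (n + 1)
  have hTfin : T.Finite := excite_set_finite tlam n
  have hUfin : U.Finite := excite_set_finite hatlam (n + 1)
  have hSsplit : S = S0 ∪ S1 := by
    ext f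
    simp only [Set.mem_union, hS0, hS1, Set.mem_setOf_eq]
    tauto
  have hdisj : Disjoint S0 S1 := by
    rw [Set.disjoint_left]
    rintro f ⟨-, h0⟩ ⟨-, h1⟩
    exact h1 h0
  -- positivity on S1
  have hS1pos : ∀ f ∈ S1, ∀ t : Fin (n + 1), 1 ≤ f t := by
    rintro f ⟨⟨hmono, -⟩, h0⟩ t
    have := hmono (Fin.zero_le t)
    omega
  -- bijection S0 ≃ T
  have hbij0 : Set.BijOn (fun f : Fin (n + 1) → ℕ => f ∘ Fin.succ) S0 T := by
    apply Set.InvOn.bijOn (f' := fun g : Fin n → ℕ => Fin.cases 0 g)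
    · constructor
      · rintro f ⟨-, h0⟩
        funext t
        induction t using Fin.cases with
        | zero => simpa using h0.symm
        | succ t => simp
      · rintro g -
        funext t
        simp
    · rintro f ⟨⟨hmono, hmem⟩, h0⟩
      constructor
      · exact fun a b hab => hmono (Fin.succ_le_succ_iff.mpr hab)
      · intro t
        rw [htlam]
        have := hmem t.succ
        simpa [Fin.val_succ, ← add_assoc] using this
    · rintro g ⟨hmono, hmem⟩
      refine ⟨⟨?_, ?_⟩, by simp⟩
      · intro a b hab
        induction a using Fin.cases with
        | zero =>
          induction b using Fin.cases with
          | zero => simp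
          | succ b => simp
        | succ a =>
          induction b using Fin.cases with
          | zero => simp [Fin.le_def] at hab
          | succ b =>
            simpa using hmono (by rwa [Fin.succ_le_succ_iff] at hab)
      · intro t
        induction t using Fin.cases with
        | zero => simpa using h00
        | succ t =>
          have := (htlam (g t) (g t + (t : ℕ))).mp (hmem t)
          simpa [Fin.val_succ, ← add_assoc] using this
  -- bijection S1 ≃ U
  have hbij1 : Set.BijOn (fun (f : Fin (n + 1) → ℕ) (t : Fin (n + 1)) => f t - 1) S1 U := by
    apply Set.InvOn.bijOn (f' := fun (g : Fin (n + 1) → ℕ) (t : Fin (n + 1)) => g t + 1)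
    · constructor
      · intro f hf
        funext t
        have := hS1pos f hf t
        show f t - 1 + 1 = f t
        omega
      · rintro g -
        funext t
        show g t + 1 - 1 = g t
        omega
    · rintro f hf
      obtain ⟨⟨hmono, hmem⟩, h0⟩ := hf
      constructor
      · exact fun a b hab => Nat.sub_le_sub_right (hmono hab) 1
      · intro t
        have h1 := hS1pos f ⟨⟨hmono, hmem⟩, h0⟩ t
        rw [hhatlam, htlam]
        have e1 : f t - 1 + 1 = f t := by omega
        have e2 : f t - 1 + (t : ℕ) + 1 = f t + (t : ℕ) := by omega
        rw [e1, e2]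
        exact hmem t
    · rintro g ⟨hmono, hmem⟩
      refine ⟨⟨fun a b hab => by simpa using hmono hab, ?_⟩, by simp⟩
      intro t
      have := (htlam _ _).mp ((hhatlam _ _).mp (hmem t))
      have e : g t + (t : ℕ) + 1 = g t + 1 + (t : ℕ) := by omega
      rwa [e] at this
  -- product identities
  have hprod0 : ∀ f ∈ S0,
      (∏ t : Fin (n + 1), hookLen lam (f t) (f t + (t : ℕ))) =
        hookLen lam 0 0 * ∏ t : Fin n, hookLen tlam ((f ∘ Fin.succ) t) ((f ∘ Fin.succ) t + (t : ℕ)) := by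
    rintro f ⟨-, h0⟩
    rw [Fin.prod_univ_succ]
    congr 1
    · simp [h0]
    · apply Finset.prod_congr rfl
      intro t _
      rw [hk1]
      simp [Fin.val_succ, ← add_assoc]
  have hprod1 : ∀ f ∈ S1,
      (∏ t : Fin (n + 1), hookLen lam (f t) (f t + (t : ℕ))) =
        ∏ t : Fin (n + 1), hookLen hatlam (f t - 1) (f t - 1 + (t : ℕ)) := by
    intro f hf
    apply Finset.prod_congr rfl
    intro t _
    have h1 := hS1pos f hf t
    rw [hk2]
    congr 1 <;> omega
  -- assemble
  have e0 : (∑ᶠ f ∈ S0, ∏ t : Fin (n + 1), hookLen lam (f t) (f t + (t : ℕ))) =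
      hookLen lam 0 0 * excite tlam n := by
    rw [finsum_mem_eq_of_bijOn
      (g := fun g : Fin n → ℕ =>
        hookLen lam 0 0 * ∏ t : Fin n, hookLen tlam (g t) (g t + (t : ℕ))) _ hbij0 hprod0]
    rw [excite]
    rw [finsum_mem_eq_finite_toFinset_sum _ hTfin, finsum_mem_eq_finite_toFinset_sum _ hTfin,
      Finset.mul_sum]
  have e1 : (∑ᶠ f ∈ S1, ∏ t : Fin (n + 1), hookLen lam (f t) (f t + (t : ℕ))) =
      excite hatlam (n + 1) := by
    rw [finsum_mem_eq_of_bijOn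
      (g := fun g : Fin (n + 1) → ℕ =>
        ∏ t : Fin (n + 1), hookLen hatlam (g t) (g t + (t : ℕ))) _ hbij1 hprod1]
    rw [excite]
  rw [excite, ← hS, hSsplit,
    finsum_mem_union hdisj (hSfin.subset (by rw [hSsplit]; exact Set.subset_union_left))
      (hSfin.subset (by rw [hSsplit]; exact Set.subset_union_right)), e0, e1]
end

section
/- Let λ be a partition of n ≥ 2. Then there exists a positive-integer rectangle partition μ = [a, a, …, a] (b parts, each equal to a, with a, b ≥ 1) such that μ is not contained in λ, the partition μ̃ = [a, …, a, a−1] (the unique 1-minor of μ) is contained in λ, and a·b < 2n/log n. -/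
/-- The b × a rectangle partition [a, a, …, a] (b parts). -/
def rectD (a b : ℕ) : YoungDiagram :=
  YoungDiagram.ofRowLens (List.replicate b a) (List.sortedGE_iff_pairwise.mpr (List.pairwise_replicate.mpr (by simp)))

/-- The unique 1-minor [a, …, a, a−1] of the b × a rectangle partition. -/
def rectMinorD (a b : ℕ) : YoungDiagram :=
  YoungDiagram.ofRowLens (List.replicate (b - 1) a ++ [a - 1]) (by
    apply List.sortedGE_iff_pairwise.mpr
    apply List.pairwise_append.mpr
    refine ⟨List.pairwise_replicate.mpr (by simp), by simp, ?_⟩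
    intro x hx y hy
    simp at hx hy
    omega)

open YoungDiagram in
lemma mem_rectD {a b : ℕ} {p : ℕ × ℕ} : p ∈ rectD a b ↔ p.1 < b ∧ p.2 < a := by
  rw [rectD, mem_ofRowLens]
  constructor
  · rintro ⟨h, h2⟩
    simp only [List.length_replicate] at h
    simp only [List.getElem_replicate] at h2
    exact ⟨h, h2⟩
  · rintro ⟨h1, h2⟩
    exact ⟨by simpa using h1, by simpa using h2⟩

open YoungDiagram in
lemma mem_rectMinorD {a b : ℕ} (hb : 1 ≤ b) {p : ℕ × ℕ} :
    p ∈ rectMinorD a b ↔ (p.1 < b - 1 ∧ p.2 < a) ∨ (p.1 = b - 1 ∧ p.2 < a - 1) := by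
  rw [rectMinorD, mem_ofRowLens]
  have hlen : (List.replicate (b - 1) a ++ [a - 1]).length = b := by
    simp; omega
  constructor
  · rintro ⟨h, h2⟩
    rw [hlen] at h
    by_cases hc : p.1 < b - 1
    · left
      refine ⟨hc, ?_⟩
      rwa [List.getElem_append_left (by simpa using hc), List.getElem_replicate] at h2
    · right
      have he : p.1 = b - 1 := by omega
      refine ⟨he, ?_⟩
      rw [List.getElem_append_right (by simpa using hc)] at h2
      simpa using h2
  · rintro (⟨h1, h2⟩ | ⟨h1, h2⟩)
    · refine ⟨by rw [hlen]; omega, ?_⟩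
      rwa [List.getElem_append_left (by simpa using h1), List.getElem_replicate]
    · refine ⟨by rw [hlen]; omega, ?_⟩
      rw [List.getElem_append_right (by simp [h1])]
      simpa [h1] using h2

open YoungDiagram in
/-- For any corner column `j` (i.e. `j = 0` or `colLen j < colLen (j-1)`), the rectangle
`(j+1) × (colLen j + 1)` is not contained, but its minor is. -/
lemma corner_rect (lam : YoungDiagram) (j : ℕ)
    (hc : j = 0 ∨ lam.colLen j < lam.colLen (j - 1)) :
    ¬ rectD (j + 1) (lam.colLen j + 1) ≤ lam ∧
      rectMinorD (j + 1) (lam.colLen j + 1) ≤ lam := by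
  constructor
  · intro hle
    have hmem : ((lam.colLen j, j) : ℕ × ℕ) ∈ rectD (j + 1) (lam.colLen j + 1) := by
      rw [mem_rectD]; omega
    have := hle hmem
    rw [mem_iff_lt_colLen] at this
    omega
  · intro p hp
    rw [mem_rectMinorD (by omega)] at hp
    rcases hp with ⟨h1, h2⟩ | ⟨h1, h2⟩
    · rw [mem_iff_lt_colLen]
      have : lam.colLen j ≤ lam.colLen p.2 := lam.colLen_anti p.2 j (by omega)
      omega
    · rcases hc with rfl | hc
      · omega
      · rw [mem_iff_lt_colLen]
        have : lam.colLen (j - 1) ≤ lam.colLen p.2 := lam.colLen_anti p.2 (j - 1) (by omega)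
        omega

open YoungDiagram in
lemma sum_colLen_le_card (lam : YoungDiagram) (J : ℕ) :
    ∑ j ∈ Finset.range J, lam.colLen j ≤ lam.card := by
  classical
  have h1 : ∑ j ∈ Finset.range J, lam.colLen j
      = ((Finset.range J).biUnion fun j => lam.col j).card := by
    rw [Finset.card_biUnion]
    · exact Finset.sum_congr rfl fun j _ => lam.colLen_eq_card
    · intro i _ k _ hik
      simp only [Finset.disjoint_left, mem_col_iff]
      rintro ⟨x, y⟩ ⟨_, rfl⟩ ⟨_, rfl⟩
      exact hik rfl
  rw [h1]
  apply Finset.card_le_card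
  intro p hp
  simp only [Finset.mem_biUnion, mem_col_iff] at hp
  obtain ⟨j, _, hpj, _⟩ := hp
  exact hpj

lemma harmonic_lb : ∀ J : ℕ, 1 ≤ J →
    1 + Real.log (J + 1) - Real.log 2 ≤ ∑ j ∈ Finset.range J, (1 : ℝ) / (j + 1) := by
  intro J hJ
  induction J, hJ using Nat.le_induction with
  | base => norm_num
  | succ J hJ ih =>
    rw [Finset.sum_range_succ]
    have h1 : Real.log ((J : ℝ) + 1 + 1) - Real.log ((J : ℝ) + 1) ≤ 1 / ((J : ℝ) + 1) := by
      have hp : (0 : ℝ) < (J : ℝ) + 1 := by positivity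
      have hp2 : (0 : ℝ) < ((J : ℝ) + 1 + 1) / ((J : ℝ) + 1) := by positivity
      have := Real.log_le_sub_one_of_pos hp2
      rw [Real.log_div (by positivity) (by positivity)] at this
      have he : ((J : ℝ) + 1 + 1) / ((J : ℝ) + 1) - 1 = 1 / ((J : ℝ) + 1) := by
        field_simp
        ring
      linarith [this, he ▸ this]
    push_cast
    linarith

open YoungDiagram in
/-- for every partition λ of n ≥ 2 there exist a, b ≥ 1 such that the
b × a rectangle [a,…,a] is not contained in λ, its unique 1-minor [a,…,a,a−1] is
contained in λ, and a·b < 2n / log n. -/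
theorem exists_rect_minor (n : ℕ) (hn : 2 ≤ n) (lam : YoungDiagram) (hlam : lam.card = n) :
    ∃ a b : ℕ, 1 ≤ a ∧ 1 ≤ b ∧ ¬ rectD a b ≤ lam ∧ rectMinorD a b ≤ lam ∧
      (a * b : ℝ) < 2 * n / Real.log n := by
  by_contra hcon
  push_neg at hcon
  set L : ℝ := Real.log n with hLdef
  set T : ℝ := 2 * n / L with hTdef
  have hn1 : (1 : ℝ) < n := by exact_mod_cast hn.trans_lt' one_lt_two
  have hn0 : (0 : ℝ) < n := by linarith
  have hL : 0 < L := Real.log_pos hn1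
  have hLn : L < n := by
    have := Real.log_le_sub_one_of_pos hn0
    rw [← hLdef] at this
    linarith
  have hT2 : (2 : ℝ) < T := by
    rw [hTdef, lt_div_iff₀ hL]
    linarith
  have hT0 : (0 : ℝ) < T := by linarith
  -- key inequality for all columns
  have hkey : ∀ j : ℕ, T ≤ ((j : ℝ) + 1) * ((lam.colLen j : ℝ) + 1) := by
    intro j
    induction j with
    | zero =>
      have h := corner_rect lam 0 (Or.inl rfl)
      have := hcon 1 (lam.colLen 0 + 1) le_rfl (by omega) h.1 h.2
      clear h
      push_cast at this ⊢
      linarith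
    | succ j ih =>
      by_cases hcc : lam.colLen (j + 1) < lam.colLen j
      · have h := corner_rect lam (j + 1) (Or.inr (by simpa using hcc))
        have := hcon (j + 2) (lam.colLen (j + 1) + 1) (by omega) (by omega) h.1 h.2
        clear h
        push_cast at this ⊢
        linarith
      · have heq : lam.colLen (j + 1) = lam.colLen j := by
          have := lam.colLen_anti j (j + 1) (by omega)
          omega
        rw [heq]
        have hc0 : (0 : ℝ) ≤ (lam.colLen j : ℝ) + 1 := by positivity
        push_cast at ih ⊢
        nlinarith
  have hcLB : ∀ j : ℕ, T / ((j : ℝ) + 1) - 1 ≤ (lam.colLen j : ℝ) := by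
    intro j
    have hj : (0 : ℝ) < (j : ℝ) + 1 := by positivity
    have := hkey j
    rw [div_sub' (ne_of_gt hj), div_le_iff₀ hj]
    nlinarith
  set J : ℕ := ⌈T⌉₊ - 1 with hJdef
  have hceil : 2 < ⌈T⌉₊ := by
    rw [Nat.lt_ceil]; exact_mod_cast hT2
  have hJ1 : 1 ≤ J := by omega
  have hJcast : (J : ℝ) = (⌈T⌉₊ : ℝ) - 1 := by
    rw [hJdef]
    push_cast [Nat.cast_sub (by omega : 1 ≤ ⌈T⌉₊)]
    ring
  have hJle : (J : ℝ) ≤ T := by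
    have := Nat.ceil_lt_add_one (le_of_lt hT0)
    rw [hJcast]; linarith
  have hTle : T ≤ (J : ℝ) + 1 := by
    have := Nat.le_ceil T
    rw [hJcast]; linarith
  -- sum bound
  have hsumn : ∑ j ∈ Finset.range J, ((lam.colLen j : ℝ)) ≤ (n : ℝ) := by
    rw [← Nat.cast_sum]
    exact_mod_cast (sum_colLen_le_card lam J).trans_eq hlam
  have hsum1 : ∑ j ∈ Finset.range J, (T / ((j : ℝ) + 1) - 1) ≤ (n : ℝ) :=
    (Finset.sum_le_sum fun j _ => hcLB j).trans hsumn
  have hsum2 : ∑ j ∈ Finset.range J, (T / ((j : ℝ) + 1) - 1)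
      = T * (∑ j ∈ Finset.range J, (1 : ℝ) / ((j : ℝ) + 1)) - J := by
    rw [Finset.sum_sub_distrib, Finset.mul_sum]
    simp [div_eq_mul_inv]
  have hharm := harmonic_lb J hJ1
  have hlogJ : Real.log T ≤ Real.log ((J : ℝ) + 1) := Real.log_le_log hT0 hTle
  have hmain : T * (1 + Real.log T - Real.log 2) - T ≤ (n : ℝ) := by
    have h1 : T * (1 + Real.log T - Real.log 2)
        ≤ T * (∑ j ∈ Finset.range J, (1 : ℝ) / ((j : ℝ) + 1)) := by
      apply mul_le_mul_of_nonneg_left _ (le_of_lt hT0)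
      linarith
    linarith [hsum2 ▸ hsum1]
  -- log T = L + log 2 - log L
  have hlogT : Real.log T = L + Real.log 2 - Real.log L := by
    rw [hTdef, Real.log_div (by positivity) (ne_of_gt hL),
        Real.log_mul (by norm_num) (ne_of_gt hn0), ← hLdef]
    ring
  have hfinal : T * (L - Real.log L) ≤ (n : ℝ) := by
    calc T * (L - Real.log L) = T * (1 + Real.log T - Real.log 2) - T := by
          rw [hlogT]; ring
      _ ≤ (n : ℝ) := hmain
  -- but T * (L - log L) > n
  have hlogL : Real.log L < L / 2 := by
    have h1 : Real.log L = Real.log 2 + Real.log (L / 2) := by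
      rw [← Real.log_mul (by norm_num) (by positivity)]
      congr 1
      ring
    have h2 : Real.log (L / 2) ≤ L / 2 - 1 := Real.log_le_sub_one_of_pos (by positivity)
    have h3 : Real.log 2 < 1 := by
      have := Real.log_two_lt_d9
      linarith
    linarith
  have hTL : T * (L - Real.log L) = 2 * n - 2 * n * Real.log L / L := by
    rw [hTdef]; field_simp
  have hlt : 2 * (n : ℝ) * Real.log L / L < n := by
    rw [div_lt_iff₀ hL]
    nlinarith
  rw [hTL] at hfinal
  linarith
end

section
/- Let λ be a partition of n, let m be a positive integer, and suppose that every partition of size at most m is contained in λ. Then n ≥ m + ⌊m/2⌋ + ⌊m/3⌋ + … + ⌊m/m⌋. -/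
def rectYD (a b : ℕ) : YoungDiagram :=
  ⟨Finset.range a ×ˢ Finset.range b, by
    intro p q hq hp
    simp only [Finset.coe_product, Finset.coe_range, Set.mem_prod, Set.mem_Iio] at *
    exact ⟨lt_of_le_of_lt hq.1 hp.1, lt_of_le_of_lt hq.2 hp.2⟩⟩

lemma rectYD_card (a b : ℕ) : (rectYD a b).card = a * b := by
  simp [rectYD, YoungDiagram.card]

lemma mem_rectYD {a b i j : ℕ} : (i, j) ∈ rectYD a b ↔ i < a ∧ j < b := by
  show (i, j) ∈ Finset.range a ×ˢ Finset.range b ↔ i < a ∧ j < b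
  simp [rectYD, YoungDiagram.mem_cells, YoungDiagram.mem_mk]

/-- if every partition of size at most m (m ≥ 1) is contained in λ, a
partition of n, then n ≥ ⌊m/1⌋ + ⌊m/2⌋ + … + ⌊m/m⌋. -/
theorem card_ge_sum_div (lam : YoungDiagram) (n m : ℕ) (hn : lam.card = n) (hm : 1 ≤ m)
    (h : ∀ μ : YoungDiagram, μ.card ≤ m → μ ≤ lam) :
    ∑ d ∈ Finset.Icc 1 m, m / d ≤ n := by
  have hrow : ∀ i < m, m / (i + 1) ≤ lam.rowLen i := by
    intro i hi
    have hc : (rectYD (i+1) (m/(i+1))).card ≤ m := by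
      rw [rectYD_card]; rw [Nat.mul_comm]; exact Nat.div_mul_le_self m (i+1)
    have := h _ hc
    rcases Nat.eq_zero_or_pos (m / (i+1)) with h0 | hpos
    · simp [h0]
    · have : (i, m/(i+1) - 1) ∈ lam := by
        apply this
        rw [mem_rectYD]
        exact ⟨Nat.lt_succ_self i, Nat.sub_lt hpos one_pos⟩
      rw [YoungDiagram.mem_iff_lt_rowLen] at this
      omega
  have hsum : ∑ i ∈ Finset.range m, lam.rowLen i ≤ lam.card := by
    classical
    have hdisj : ((Finset.range m : Finset ℕ) : Set ℕ).PairwiseDisjoint lam.row := by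
      intro a _ b _ hab
      simp only [Finset.disjoint_left, YoungDiagram.mem_row_iff]
      rintro ⟨x, y⟩ ⟨_, rfl⟩ ⟨_, h2⟩; exact hab h2
    calc ∑ i ∈ Finset.range m, lam.rowLen i
        = ((Finset.range m).biUnion lam.row).card := by
          rw [Finset.card_biUnion hdisj]
          exact Finset.sum_congr rfl fun i _ => lam.rowLen_eq_card
      _ ≤ lam.card := by
          apply Finset.card_le_card
          intro p hp
          simp only [Finset.mem_biUnion, YoungDiagram.mem_row_iff] at hp
          obtain ⟨i, _, hpi, _⟩ := hp
          exact hpi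
  calc ∑ d ∈ Finset.Icc 1 m, m / d = ∑ i ∈ Finset.range m, m / (1 + i) := by
        rw [← Finset.Ico_add_one_right_eq_Icc, Finset.sum_Ico_eq_sum_range]
        simp
    _ ≤ ∑ i ∈ Finset.range m, lam.rowLen i := by
        apply Finset.sum_le_sum
        intro i hi
        rw [Nat.add_comm]
        exact hrow i (Finset.mem_range.mp hi)
    _ ≤ n := hn ▸ hsum
end

section
/- For every integer r ≥ 1 and integer u ≥ 0, the partition λ^{r,u} = [5r+3u+2, u+2, 2, 2, …, 2 (3r+u copies of 2), 1, 1, …, 1 (r+2u copies of 1)] of n = 4(3r+2u+1) satisfies E₂(λ^{r,u}) = E₂((λ^{r,u})ᵗ) = 72r² + 32u² + 96ru + 42r + 28u + 6, and λ^{r,u} ≠ (λ^{r,u})ᵗ. -/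
lemma fin2_eq_iff (a b : ℕ) (f : Fin 2 → ℕ) : f = ![a,b] ↔ f 0 = a ∧ f 1 = b := by
  constructor
  · rintro rfl; simp
  · rintro ⟨h0, h1⟩; funext t; fin_cases t <;> simpa

lemma monotone_fin2 (f : Fin 2 → ℕ) : Monotone f ↔ f 0 ≤ f 1 := by
  constructor
  · intro h; exact h (by decide)
  · intro h a b hab
    fin_cases a <;> fin_cases b <;> first | rfl | exact h | exact absurd hab (by decide)

lemma excite_two_eq (μ : YoungDiagram) (F : Finset (Fin 2 → ℕ))
    (hF : {f : Fin 2 → ℕ | Monotone f ∧ ∀ t : Fin 2, (f t, f t + (t : ℕ)) ∈ μ} = ↑F) :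
    excite μ 2 = ∑ f ∈ F, ∏ t : Fin 2, hookLen μ (f t) (f t + (t : ℕ)) := by
  rw [excite, hF, finsum_mem_coe_finset]

lemma card_eq_sum_rowLen (μ : YoungDiagram) (N : ℕ) (h : μ.rowLen N = 0) :
    μ.card = ∑ i ∈ Finset.range N, μ.rowLen i := by
  have hcells : μ.cells = (Finset.range N).biUnion (fun i => μ.row i) := by
    ext ⟨i, j⟩
    simp only [Finset.mem_biUnion, Finset.mem_range, YoungDiagram.mem_row_iff,
      YoungDiagram.mem_cells]
    constructor
    · intro hm
      refine ⟨i, ?_, hm, rfl⟩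
      by_contra hN
      push_neg at hN
      have h2 := μ.rowLen_anti N i hN
      rw [YoungDiagram.mem_iff_lt_rowLen] at hm
      omega
    · rintro ⟨i', _, hm, rfl⟩; exact hm
  rw [YoungDiagram.card, hcells, Finset.card_biUnion]
  · exact Finset.sum_congr rfl fun i _ => (μ.rowLen_eq_card).symm
  · intro a _ b _ hab
    simp only [Finset.disjoint_left, YoungDiagram.mem_row_iff]
    rintro x ⟨_, rfl⟩ ⟨_, h2⟩
    exact hab h2

set_option maxHeartbeats 2000000 in
/-- for r ≥ 1, u ≥ 0, the partition
λ^{r,u} = [5r+3u+2, u+2, 2^{3r+u}, 1^{r+2u}] is a partition of n = 4(3r+2u+1), is not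
self-conjugate, and satisfies E₂(λ^{r,u}) = E₂((λ^{r,u})ᵗ) = 72r² + 32u² + 96ru + 42r + 28u + 6. -/
theorem excite_two_lambda_ru (r u : ℕ) (hr : 1 ≤ r) (lam : YoungDiagram)
    (hrow : ∀ i : ℕ, lam.rowLen i =
      if i = 0 then 5 * r + 3 * u + 2
      else if i = 1 then u + 2
      else if i < 2 + (3 * r + u) then 2
      else if i < 2 + (3 * r + u) + (r + 2 * u) then 1
      else 0) :
    lam.card = 4 * (3 * r + 2 * u + 1) ∧
      excite lam 2 = 72 * r ^ 2 + 32 * u ^ 2 + 96 * r * u + 42 * r + 28 * u + 6 ∧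
      excite lam.transpose 2 = 72 * r ^ 2 + 32 * u ^ 2 + 96 * r * u + 42 * r + 28 * u + 6 ∧
      lam ≠ lam.transpose := by
  have hd : ∀ a : ℕ, ((a, a) ∈ lam ↔ a < 2) := by
    intro a; rw [YoungDiagram.mem_iff_lt_rowLen, hrow]; split_ifs <;> first | contradiction | omega
  have he : ∀ b : ℕ, ((b, b + 1) ∈ lam ↔ b = 0 ∨ (b = 1 ∧ 1 ≤ u)) := by
    intro b; rw [YoungDiagram.mem_iff_lt_rowLen, hrow]; split_ifs <;> first | contradiction | omega
  have het : ∀ b : ℕ, ((b + 1, b) ∈ lam ↔ b < 2) := by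
    intro b; rw [YoungDiagram.mem_iff_lt_rowLen, hrow]; split_ifs <;> first | contradiction | omega
  have hcol0 : lam.colLen 0 = 4*r+3*u+2 := by
    have h1 : (4*r+3*u+1, 0) ∈ lam := by
      rw [YoungDiagram.mem_iff_lt_rowLen, hrow]; split_ifs <;> first | contradiction | omega
    have h2 : (4*r+3*u+2, 0) ∉ lam := by
      rw [YoungDiagram.mem_iff_lt_rowLen, hrow]; split_ifs <;> first | contradiction | omega
    rw [YoungDiagram.mem_iff_lt_colLen] at h1 h2; omega
  have hcol1 : lam.colLen 1 = 3*r+u+2 := by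
    have h1 : (3*r+u+1, 1) ∈ lam := by
      rw [YoungDiagram.mem_iff_lt_rowLen, hrow]; split_ifs <;> first | contradiction | omega
    have h2 : (3*r+u+2, 1) ∉ lam := by
      rw [YoungDiagram.mem_iff_lt_rowLen, hrow]; split_ifs <;> first | contradiction | omega
    rw [YoungDiagram.mem_iff_lt_colLen] at h1 h2; omega
  refine ⟨?_, ?_, ?_, ?_⟩
  · -- card
    have hN : lam.rowLen (2+(3*r+u)+(r+2*u)) = 0 := by
      rw [hrow]; split_ifs <;> first | contradiction | omega
    rw [card_eq_sum_rowLen lam _ hN, Finset.range_eq_Ico,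
      ← Finset.sum_Ico_consecutive _ (show 0 ≤ 2+(3*r+u) by omega)
        (show 2+(3*r+u) ≤ 2+(3*r+u)+(r+2*u) by omega),
      ← Finset.sum_Ico_consecutive _ (show 0 ≤ 2 by omega) (show 2 ≤ 2+(3*r+u) by omega)]
    have e1 : ∑ i ∈ Finset.Ico 0 2, lam.rowLen i = 5*r+4*u+4 := by
      rw [show (Finset.Ico 0 2 : Finset ℕ) = {0, 1} by decide,
        Finset.sum_insert (by decide), Finset.sum_singleton, hrow, hrow]
      split_ifs <;> first | contradiction | omega
    have e2 : ∑ i ∈ Finset.Ico 2 (2+(3*r+u)), lam.rowLen i = (3*r+u) * 2 := by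
      have hc : ∀ i ∈ Finset.Ico 2 (2+(3*r+u)), lam.rowLen i = 2 := by
        intro i hi; simp only [Finset.mem_Ico] at hi; rw [hrow]; split_ifs <;> first | contradiction | omega
      rw [Finset.sum_congr rfl hc, Finset.sum_const, Nat.card_Ico, smul_eq_mul]
      omega
    have e3 : ∑ i ∈ Finset.Ico (2+(3*r+u)) (2+(3*r+u)+(r+2*u)), lam.rowLen i = r+2*u := by
      have hc : ∀ i ∈ Finset.Ico (2+(3*r+u)) (2+(3*r+u)+(r+2*u)), lam.rowLen i = 1 := by
        intro i hi; simp only [Finset.mem_Ico] at hi; rw [hrow]; split_ifs <;> first | contradiction | omega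
      rw [Finset.sum_congr rfl hc, Finset.sum_const, Nat.card_Ico, smul_eq_mul]
      omega
    rw [e1, e2, e3]; omega
  · -- excite lam
    have H00 : hookLen lam 0 0 = 9*r+6*u+3 := by
      simp only [hookLen]; rw [hrow, hcol0]; split_ifs <;> first | contradiction | omega
    have H01 : hookLen lam 0 1 = 8*r+4*u+2 := by
      simp only [hookLen]; rw [hrow, hcol1]; split_ifs <;> first | contradiction | omega
    have H11 : hookLen lam 1 1 = 3*r+2*u+1 := by
      simp only [hookLen]; rw [hrow, hcol1]; split_ifs <;> first | contradiction | omega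
    rcases Nat.eq_zero_or_pos u with hu | hu
    · subst hu
      have hset : {f : Fin 2 → ℕ | Monotone f ∧ ∀ t : Fin 2, (f t, f t + (t : ℕ)) ∈ lam}
          = ↑({![0,0]} : Finset (Fin 2 → ℕ)) := by
        ext f
        simp only [Set.mem_setOf_eq, monotone_fin2, Fin.forall_fin_two, Fin.val_zero,
          Fin.val_one, add_zero, Finset.coe_singleton, Set.mem_singleton_iff, fin2_eq_iff,
          hd, he]
        omega
      rw [excite_two_eq lam _ hset, Finset.sum_singleton]
      norm_num [Fin.prod_univ_two]
      rw [H00, H01]; ring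
    · have hcol2 : lam.colLen 2 = 2 := by
        have h1 : (1, 2) ∈ lam := by
          rw [YoungDiagram.mem_iff_lt_rowLen, hrow]; split_ifs <;> first | contradiction | omega
        have h2 : (2, 2) ∉ lam := by
          rw [YoungDiagram.mem_iff_lt_rowLen, hrow]; split_ifs <;> first | contradiction | omega
        rw [YoungDiagram.mem_iff_lt_colLen] at h1 h2; omega
      have H12 : hookLen lam 1 2 = u := by
        simp only [hookLen]; rw [hrow, hcol2]; split_ifs <;> first | contradiction | omega
      have hset : {f : Fin 2 → ℕ | Monotone f ∧ ∀ t : Fin 2, (f t, f t + (t : ℕ)) ∈ lam}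
          = ↑({![0,0], ![0,1], ![1,1]} : Finset (Fin 2 → ℕ)) := by
        ext f
        simp only [Set.mem_setOf_eq, monotone_fin2, Fin.forall_fin_two, Fin.val_zero,
          Fin.val_one, add_zero, Finset.coe_insert, Set.mem_insert_iff, Finset.coe_singleton,
          Set.mem_singleton_iff, fin2_eq_iff, hd, he]
        omega
      rw [excite_two_eq lam _ hset, Finset.sum_insert (by simp [fin2_eq_iff]),
        Finset.sum_insert (by simp [fin2_eq_iff]), Finset.sum_singleton]
      norm_num [Fin.prod_univ_two]
      rw [H00, H01, H11, H12]; ring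
  · -- excite transpose
    have H00 : hookLen lam.transpose 0 0 = 9*r+6*u+3 := by
      simp only [hookLen, YoungDiagram.rowLen_transpose, YoungDiagram.colLen_transpose]
      rw [hrow, hcol0]; split_ifs <;> first | contradiction | omega
    have H01 : hookLen lam.transpose 0 1 = 4*r+4*u+2 := by
      simp only [hookLen, YoungDiagram.rowLen_transpose, YoungDiagram.colLen_transpose]
      rw [hrow, hcol0]; split_ifs <;> first | contradiction | omega
    have H11 : hookLen lam.transpose 1 1 = 3*r+2*u+1 := by
      simp only [hookLen, YoungDiagram.rowLen_transpose, YoungDiagram.colLen_transpose]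
      rw [hrow, hcol1]; split_ifs <;> first | contradiction | omega
    have H12 : hookLen lam.transpose 1 2 = 3*r+u := by
      simp only [hookLen, YoungDiagram.rowLen_transpose, YoungDiagram.colLen_transpose]
      rw [hrow, hcol1]; split_ifs <;> first | contradiction | omega
    have hset : {f : Fin 2 → ℕ | Monotone f ∧ ∀ t : Fin 2, (f t, f t + (t : ℕ)) ∈ lam.transpose}
        = ↑({![0,0], ![0,1], ![1,1]} : Finset (Fin 2 → ℕ)) := by
      ext f
      simp only [Set.mem_setOf_eq, monotone_fin2, Fin.forall_fin_two, Fin.val_zero,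
        Fin.val_one, add_zero, YoungDiagram.mem_transpose, Prod.swap_prod_mk,
        Finset.coe_insert, Set.mem_insert_iff, Finset.coe_singleton,
        Set.mem_singleton_iff, fin2_eq_iff, hd, het]
      omega
    rw [excite_two_eq lam.transpose _ hset, Finset.sum_insert (by simp [fin2_eq_iff]),
      Finset.sum_insert (by simp [fin2_eq_iff]), Finset.sum_singleton]
    norm_num [Fin.prod_univ_two]
    rw [H00, H01, H11, H12]; ring
  · -- ne
    intro h
    have h1 : lam.rowLen 1 = lam.transpose.rowLen 1 := by rw [← h]
    rw [YoungDiagram.rowLen_transpose, hcol1, hrow] at h1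
    split_ifs at h1 <;> omega
end

section
/- For every partition τ, E₂(τ) − E₂(τᵗ) = Σ_{i=1}^{rk(τ)} h_{i,i}(τ)·(τ_i − (τᵗ)_i), where rk(τ) is the side length of the Durfee square of τ (the largest m with the m×m square contained in τ), h_{i,i}(τ) is the hook length of the diagonal cell (i,i), and τ_i, (τᵗ)_i are the i-th parts of τ and its conjugate. -/
open Finset

/-- `excite lam 2` as an explicit double sum over pairs of indices. -/
lemma excite_two_eq_sum (lam : YoungDiagram) :
    excite lam 2 =
      ∑ i ∈ range (lam.colLen 0), ∑ j ∈ range (lam.colLen 0),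
        if i ≤ j ∧ (i, i) ∈ lam ∧ (j, j + 1) ∈ lam then
          hookLen lam i i * hookLen lam j (j + 1) else 0 := by
  classical
  set c := lam.colLen 0 with hc
  have hbound : ∀ x y : ℕ, (x, y) ∈ lam → x < c := fun x y h => by
    have h1 := YoungDiagram.mem_iff_lt_colLen.mp h
    exact lt_of_lt_of_le h1 (lam.colLen_anti 0 y (Nat.zero_le _))
  set s : Finset (Fin 2 → ℕ) :=
    (Fintype.piFinset fun _ => range c).filter
      (fun f => Monotone f ∧ ∀ t : Fin 2, (f t, f t + (t : ℕ)) ∈ lam) with hs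
  have hS : {f : Fin 2 → ℕ | Monotone f ∧ ∀ t : Fin 2, (f t, f t + (t : ℕ)) ∈ lam}
      = ↑s := by
    ext f
    simp only [hs, Set.mem_setOf_eq, coe_filter, Fintype.mem_piFinset, mem_range,
      Set.mem_setOf_eq]
    exact ⟨fun h => ⟨fun t => hbound _ _ (h.2 t), h⟩, fun h => h.2⟩
  rw [excite, hS, finsum_mem_coe_finset]
  rw [← Finset.sum_product']
  rw [← Finset.sum_filter]
  refine Finset.sum_nbij' (fun f => (f 0, f 1)) (fun p => ![p.1, p.2]) ?_ ?_ ?_ ?_ ?_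
  · intro f hf
    simp only [hs, mem_filter, Fintype.mem_piFinset, mem_range] at hf
    obtain ⟨hb, hmono, hmem⟩ := hf
    simp only [mem_filter, mem_product, mem_range]
    refine ⟨⟨hb 0, hb 1⟩, hmono (by norm_num : (0:Fin 2) ≤ 1), ?_, ?_⟩
    · simpa using hmem 0
    · simpa using hmem 1
  · intro p hp
    simp only [mem_filter, mem_product, mem_range] at hp
    obtain ⟨⟨h1, h2⟩, hle, hm1, hm2⟩ := hp
    simp only [hs, mem_filter, Fintype.mem_piFinset, mem_range]
    refine ⟨fun t => by fin_cases t <;> simpa, ?_, ?_⟩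
    · intro a b hab
      fin_cases a <;> fin_cases b <;> simp_all
    · intro t; fin_cases t <;> simpa
  · intro f _
    funext t; fin_cases t <;> rfl
  · intro p _
    rfl
  · intro f hf
    rw [Fin.prod_univ_two]
    simp

/-- `excite lam 2` restricted to the Durfee square. -/
lemma excite_two_eq_s18 (lam : YoungDiagram) (d : ℕ)
    (hd : ∀ i : ℕ, (i, i) ∈ lam ↔ i < d) :
    (excite lam 2 : ℤ) =
      ∑ i ∈ range d, (hookLen lam i i : ℤ) *
        ∑ j ∈ Ico i d, if (j, j + 1) ∈ lam then (hookLen lam j (j + 1) : ℤ) else 0 := by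
  classical
  rw [excite_two_eq_sum]
  set c := lam.colLen 0 with hc
  have hdc : d ≤ c := by
    rcases Nat.eq_zero_or_pos d with h | h
    · omega
    · have h1 : (d - 1, d - 1) ∈ lam := (hd (d - 1)).mpr (by omega)
      have h2 := YoungDiagram.mem_iff_lt_colLen.mp h1
      have h3 := lam.colLen_anti 0 (d - 1) (Nat.zero_le _)
      omega
  push_cast [apply_ite ((↑) : ℕ → ℤ)]
  rw [← Finset.sum_subset (Finset.range_subset_range.mpr hdc) (by
    intro i _ hi
    rw [mem_range, not_lt] at hi
    have : (i, i) ∉ lam := fun hm => by have := (hd i).mp hm; omega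
    apply Finset.sum_eq_zero
    intro j _
    rw [if_neg (by tauto)])]
  apply Finset.sum_congr rfl
  intro i hi
  rw [mem_range] at hi
  have hii : (i, i) ∈ lam := (hd i).mpr hi
  rw [Finset.mul_sum]
  rw [← Finset.sum_subset (show Ico i d ⊆ range c by
      intro j hj; rw [mem_Ico] at hj; rw [mem_range]; omega) (by
    intro j hjc hj
    rw [mem_Ico, not_and_or, not_le, not_lt] at hj
    rcases hj with hj | hj
    · rw [if_neg (by rintro ⟨h1, -, -⟩; omega)]
    · have : (j, j + 1) ∉ lam := fun hm => by
        have := (hd j).mp (lam.up_left_mem le_rfl (by omega) hm)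
        omega
      rw [if_neg (by tauto)])]
  apply Finset.sum_congr rfl
  intro j hj
  rw [mem_Ico] at hj
  simp only [hj.1, hii, true_and, mul_ite, mul_zero]

/-- Value of a single term of the inner sum. -/
lemma g_formula (lam : YoungDiagram) (j : ℕ) (hjj : (j, j) ∈ lam) :
    (if (j, j + 1) ∈ lam then (hookLen lam j (j + 1) : ℤ) else 0) =
      ((lam.rowLen j : ℤ) - j - 1) + max ((lam.colLen (j + 1) : ℤ) - (j + 1)) 0 := by
  have hjr : j < lam.rowLen j := YoungDiagram.mem_iff_lt_rowLen.mp hjj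
  by_cases h : (j, j + 1) ∈ lam
  · have ha : j + 1 < lam.rowLen j := YoungDiagram.mem_iff_lt_rowLen.mp h
    have hb : j < lam.colLen (j + 1) := YoungDiagram.mem_iff_lt_colLen.mp h
    rw [if_pos h, max_eq_left (by omega)]
    simp only [hookLen]
    omega
  · have ha : lam.rowLen j ≤ j + 1 := by
      by_contra hcon
      exact h (YoungDiagram.mem_iff_lt_rowLen.mpr (by omega))
    have hb : lam.colLen (j + 1) ≤ j := by
      by_contra hcon
      exact h (YoungDiagram.mem_iff_lt_colLen.mpr (by omega))
    rw [if_neg h, max_eq_right (by omega)]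
    omega

/-- Telescoping sum over `Ico`. -/
lemma telescope (F : ℕ → ℤ) (i d : ℕ) (hid : i ≤ d) :
    ∑ j ∈ Ico i d, (F j - F (j + 1)) = F i - F d := by
  rw [Finset.sum_Ico_eq_sum_range]
  have h := Finset.sum_range_sub' (fun k => F (i + k)) (d - i)
  calc ∑ k ∈ range (d - i), (F (i + k) - F (i + k + 1))
      = ∑ k ∈ range (d - i), (F (i + k) - F (i + (k + 1))) := by
        apply Finset.sum_congr rfl; intro k _; ring_nf
    _ = F (i + 0) - F (i + (d - i)) := h
    _ = F i - F d := by rw [Nat.add_zero, Nat.add_sub_cancel' hid]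

/-- for every partition τ with Durfee square of side d,
E₂(τ) − E₂(τᵗ) = Σ_{i=1}^{d} h_{i,i}(τ) · (τ_i − (τᵗ)_i)  (0-indexed below). -/
theorem excite_two_sub_transpose (tau : YoungDiagram) (d : ℕ)
    (hd : ∀ i : ℕ, (i, i) ∈ tau ↔ i < d) :
    (excite tau 2 : ℤ) - (excite tau.transpose 2 : ℤ) =
      ∑ i ∈ Finset.range d,
        (hookLen tau i i : ℤ) * ((tau.rowLen i : ℤ) - (tau.colLen i : ℤ)) := by
  classical
  have hdT : ∀ i : ℕ, (i, i) ∈ tau.transpose ↔ i < d := by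
    intro i
    rw [YoungDiagram.mem_transpose]
    exact hd i
  have hdd : (d, d) ∉ tau := fun hm => by have := (hd d).mp hm; omega
  have hrd : tau.rowLen d ≤ d := by
    by_contra hcon
    exact hdd (YoungDiagram.mem_iff_lt_rowLen.mpr (by omega))
  have hcd : tau.colLen d ≤ d := by
    by_contra hcon
    exact hdd (YoungDiagram.mem_iff_lt_colLen.mpr (by omega))
  set M : ℕ → ℤ := fun k =>
    max ((tau.rowLen k : ℤ) - k) 0 - max ((tau.colLen k : ℤ) - k) 0 with hM
  rw [excite_two_eq_s18 tau d hd, excite_two_eq_s18 tau.transpose d hdT,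
    ← Finset.sum_sub_distrib]
  apply Finset.sum_congr rfl
  intro i hi
  rw [mem_range] at hi
  have hii : (i, i) ∈ tau := (hd i).mpr hi
  have hhook : (hookLen tau.transpose i i : ℤ) = hookLen tau i i := by
    simp only [hookLen, YoungDiagram.rowLen_transpose, YoungDiagram.colLen_transpose]
    push_cast
    ring
  rw [hhook, ← mul_sub]
  congr 1
  rw [← Finset.sum_sub_distrib]
  have key : ∀ j ∈ Ico i d,
      ((if (j, j + 1) ∈ tau then (hookLen tau j (j + 1) : ℤ) else 0) -
        (if (j, j + 1) ∈ tau.transpose then (hookLen tau.transpose j (j + 1) : ℤ) else 0))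
      = M j - M (j + 1) := by
    intro j hj
    rw [mem_Ico] at hj
    have hjj : (j, j) ∈ tau := (hd j).mpr hj.2
    have hjjT : (j, j) ∈ tau.transpose := (hdT j).mpr hj.2
    have h1 := g_formula tau j hjj
    have h2 := g_formula tau.transpose j hjjT
    rw [YoungDiagram.rowLen_transpose, YoungDiagram.colLen_transpose] at h2
    have hr : j < tau.rowLen j := YoungDiagram.mem_iff_lt_rowLen.mp hjj
    have hc : j < tau.colLen j := YoungDiagram.mem_iff_lt_colLen.mp hjj
    rw [h1, h2]
    simp only [hM]
    push_cast
    rw [max_eq_left (show (0:ℤ) ≤ (tau.rowLen j : ℤ) - j by omega),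
      max_eq_left (show (0:ℤ) ≤ (tau.colLen j : ℤ) - j by omega)]
    ring
  rw [Finset.sum_congr rfl key, telescope M i d (le_of_lt hi)]
  have hr : i < tau.rowLen i := YoungDiagram.mem_iff_lt_rowLen.mp hii
  have hc : i < tau.colLen i := YoungDiagram.mem_iff_lt_colLen.mp hii
  simp only [hM]
  rw [max_eq_left (show (0:ℤ) ≤ (tau.rowLen i : ℤ) - i by omega),
    max_eq_left (show (0:ℤ) ≤ (tau.colLen i : ℤ) - i by omega),
    max_eq_right (show (tau.rowLen d : ℤ) - d ≤ 0 by omega),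
    max_eq_right (show (tau.colLen d : ℤ) - d ≤ 0 by omega)]
  ring
end
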